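/- arXiv:math/0511147 — 8 statements merged into one kernel-verified Lean document; each statement's English description precedes it below -/
import Mathlib

section
/- A real orthogonal 2×2 matrix R (i.e. R ∈ O(2,ℝ)) is a coincidence isometry of the square lattice ℤ² — meaning that the subgroup ℤ² ∩ R(ℤ²) has finite index in ℤ² — if and only if all four entries of R are rational numbers. -/
open Matrix

/-- The square lattice `ℤ²`, viewed as the additive subgroup of `ℝ²` generated by the
standard basis vectors. -/
noncomputable def squareLattice : AddSubgroup (Fin 2 → ℝ) :=
  AddSubgroup.closure (Set.range fun i : Fin 2 => (Pi.single i 1 : Fin 2 → ℝ))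

lemma mem_squareLattice (v : Fin 2 → ℝ) :
    v ∈ squareLattice ↔ ∀ i, ∃ n : ℤ, v i = n := by
  constructor
  · intro hv
    induction hv using AddSubgroup.closure_induction with
    | mem x hx =>
      obtain ⟨i, rfl⟩ := hx
      intro j
      rcases eq_or_ne j i with rfl | h
      · exact ⟨1, by simp⟩
      · exact ⟨0, by simp [Pi.single_apply, h]⟩
    | zero => exact fun i => ⟨0, by simp⟩
    | add x y _ _ hx hy =>
      intro i
      obtain ⟨a, ha⟩ := hx i
      obtain ⟨b, hb⟩ := hy i
      exact ⟨a + b, by simp [ha, hb]⟩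
    | neg x _ hx =>
      intro i
      obtain ⟨a, ha⟩ := hx i
      exact ⟨-a, by simp [ha]⟩
  · intro h
    obtain ⟨a, ha⟩ := h 0
    obtain ⟨b, hb⟩ := h 1
    have : v = a • (Pi.single 0 1 : Fin 2 → ℝ) + b • (Pi.single 1 1 : Fin 2 → ℝ) := by
      funext j
      fin_cases j <;> simp [ha, hb]
    rw [this]
    exact AddSubgroup.add_mem _
      (AddSubgroup.zsmul_mem _ (AddSubgroup.subset_closure (Set.mem_range_self 0)) a)
      (AddSubgroup.zsmul_mem _ (AddSubgroup.subset_closure (Set.mem_range_self 1)) b)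

set_option synthInstance.maxHeartbeats 1000000 in
/-- A real orthogonal 2×2 matrix `R` is a coincidence isometry of the square lattice `ℤ²`
(i.e. `ℤ² ∩ R(ℤ²)` has finite index in `ℤ²`) if and only if all four entries of `R` are
rational numbers. -/
theorem squareLattice_coincidence_iff_rational
    (R : Matrix.orthogonalGroup (Fin 2) ℝ) :
    (AddSubgroup.relIndex
        (squareLattice ⊓
          AddSubgroup.map (Matrix.mulVecLin (R : Matrix (Fin 2) (Fin 2) ℝ)).toAddMonoidHom
            squareLattice)
        squareLattice ≠ 0) ↔
      ∀ i j : Fin 2, ∃ q : ℚ, (R : Matrix (Fin 2) (Fin 2) ℝ) i j = (q : ℝ) := by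
  set M : Matrix (Fin 2) (Fin 2) ℝ := (R : Matrix (Fin 2) (Fin 2) ℝ) with hM
  have hMo : M * Mᵀ = 1 := by
    have h := (Matrix.mem_orthogonalGroup_iff (Fin 2) ℝ).mp R.2
    exact h
  have hMo' : Mᵀ * M = 1 := by
    have h := (Matrix.mem_orthogonalGroup_iff' (Fin 2) ℝ).mp R.2
    exact h
  set H : AddSubgroup (Fin 2 → ℝ) :=
    squareLattice ⊓ AddSubgroup.map (Matrix.mulVecLin M).toAddMonoidHom squareLattice with hH
  constructor
  · intro hn
    set n : ℕ := AddSubgroup.relIndex H squareLattice with hn'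
    have key : ∀ v ∈ squareLattice, n • v ∈ H := by
      intro v hv
      have := AddSubgroup.nsmul_index_mem (H.addSubgroupOf squareLattice) (⟨v, hv⟩ : squareLattice)
      have h2 := (AddSubgroup.mem_addSubgroupOf).mp this
      simpa [hn', AddSubgroup.relIndex] using h2
    intro i j
    have hmem := key (Pi.single i 1) (by
      rw [mem_squareLattice]
      intro k
      rcases eq_or_ne k i with rfl | h
      · exact ⟨1, by simp⟩
      · exact ⟨0, by simp [Pi.single_apply, h]⟩)
    have hmap := (AddSubgroup.mem_inf.mp hmem).2
    rw [AddSubgroup.mem_map] at hmap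
    obtain ⟨w, hw, hww⟩ := hmap
    -- hww : M.mulVec w = n • Pi.single i 1
    have hww' : M.mulVec w = n • Pi.single i 1 := hww
    have hw2 : w = Mᵀ.mulVec (M.mulVec w) := by
      rw [Matrix.mulVec_mulVec, hMo', Matrix.one_mulVec]
    have hwj : w j = (n : ℝ) * M i j := by
      conv_lhs => rw [hw2, hww']
      rw [Matrix.mulVec_smul, Matrix.mulVec_single]
      simp [Matrix.transpose_apply, mul_comm]
    obtain ⟨m, hm⟩ := (mem_squareLattice w).mp hw j
    refine ⟨(m : ℚ) / (n : ℚ), ?_⟩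
    have hn0 : (n : ℝ) ≠ 0 := Nat.cast_ne_zero.mpr hn
    push_cast
    rw [eq_div_iff hn0, mul_comm, ← hwj, hm]
  · intro hq
    choose q hq using hq
    set N : ℕ := ∏ i : Fin 2, ∏ j : Fin 2, (q i j).den with hN
    have hdvd : ∀ i j, (q i j).den ∣ N := by
      intro i j
      calc (q i j).den ∣ ∏ j' : Fin 2, (q i j').den :=
            Finset.dvd_prod_of_mem _ (Finset.mem_univ j)
        _ ∣ N := Finset.dvd_prod_of_mem (fun i' => ∏ j' : Fin 2, (q i' j').den) (Finset.mem_univ i)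
    have hNpos : 0 < N := Finset.prod_pos fun i _ => Finset.prod_pos fun j _ => (q i j).den_pos
    have hN0 : N ≠ 0 := hNpos.ne'
    haveI : NeZero N := ⟨hN0⟩
    have hent : ∀ i j, ∃ r : ℤ, M i j * (N : ℝ) = (r : ℝ) := by
      intro i j
      obtain ⟨t, ht⟩ := hdvd i j
      refine ⟨(q i j).num * t, ?_⟩
      have hden : (((q i j).den : ℝ)) ≠ 0 := Nat.cast_ne_zero.mpr (q i j).den_nz
      rw [hq i j, Rat.cast_def, ht]
      push_cast
      field_simp
    choose r hr using hent
    have hfl : ∀ v : squareLattice, ∀ i, ((⌊(v : Fin 2 → ℝ) i⌋ : ℝ)) = (v : Fin 2 → ℝ) i := by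
      intro v i
      obtain ⟨m, hm⟩ := (mem_squareLattice _).mp v.2 i
      rw [hm, Int.floor_intCast]
    let φ : squareLattice →+ (Fin 2 → ZMod N) :=
      { toFun := fun v => fun i => ((⌊(v : Fin 2 → ℝ) i⌋ : ZMod N))
        map_zero' := by
          funext i
          simp
        map_add' := by
          intro v w
          funext i
          have hfloor : ⌊((v + w : squareLattice) : Fin 2 → ℝ) i⌋
              = ⌊(v : Fin 2 → ℝ) i⌋ + ⌊(w : Fin 2 → ℝ) i⌋ := by
            have h : ((v + w : squareLattice) : Fin 2 → ℝ) i
                = ((⌊(v : Fin 2 → ℝ) i⌋ + ⌊(w : Fin 2 → ℝ) i⌋ : ℤ) : ℝ) := by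
              push_cast
              rw [hfl v i, hfl w i]
              simp
            rw [h, Int.floor_intCast]
          simp only [hfloor, Pi.add_apply]
          push_cast
          ring }
    have hker : φ.ker ≤ H.addSubgroupOf squareLattice := by
      rintro ⟨v, hv⟩ hvk
      have hvk' : ∀ i, ((⌊v i⌋ : ZMod N)) = 0 := fun i => congrFun hvk i
      have hdvdv : ∀ i, ∃ m : ℤ, ⌊v i⌋ = (N : ℤ) * m := by
        intro i
        obtain ⟨m, hm⟩ := (ZMod.intCast_zmod_eq_zero_iff_dvd _ N).mp (hvk' i)
        exact ⟨m, hm⟩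
      choose m hm using hdvdv
      have hvi : ∀ i, v i = (N : ℝ) * (m i : ℝ) := by
        intro i
        have h2 : ((⌊v i⌋ : ℝ)) = v i := hfl ⟨v, hv⟩ i
        rw [← h2, hm i]
        push_cast
        ring
      rw [AddSubgroup.mem_addSubgroupOf]
      refine AddSubgroup.mem_inf.mpr ⟨hv, ?_⟩
      rw [AddSubgroup.mem_map]
      refine ⟨Mᵀ.mulVec v, ?_, ?_⟩
      · rw [mem_squareLattice]
        intro j
        refine ⟨∑ i : Fin 2, r i j * m i, ?_⟩
        have hsum : Mᵀ.mulVec v j = ∑ i : Fin 2, (r i j : ℝ) * (m i : ℝ) := by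
          show ∑ i : Fin 2, Mᵀ j i * v i = _
          refine Finset.sum_congr rfl fun k _ => ?_
          rw [Matrix.transpose_apply, hvi k, ← mul_assoc, hr k j]
        rw [hsum]
        push_cast
        ring
      · show M.mulVec (Mᵀ.mulVec v) = v
        rw [Matrix.mulVec_mulVec, hMo, Matrix.one_mulVec]
    have hne : φ.ker.index ≠ 0 := by
      rw [AddSubgroup.index_ker]
      haveI : Nonempty φ.range := ⟨0⟩
      haveI : Finite (Fin 2 → ZMod N) := inferInstance
      haveI : Finite φ.range := Subtype.finite
      exact Nat.card_pos.ne'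
    have h1 : (H.addSubgroupOf squareLattice).index ∣ φ.ker.index :=
      AddSubgroup.index_dvd_of_le hker
    exact ne_zero_of_dvd_ne_zero hne h1
end

section
/- Let α and β be coprime Gaussian integers (i.e. the ideals they generate in ℤ[i] are comaximal) with equal norms norm(α) = norm(β) = m, and let z = α/β ∈ ℂ. Then the additive subgroup ℤ[i] ∩ z·ℤ[i] of ℂ equals α·ℤ[i] and has index m in ℤ[i]. -/
open GaussianInt

/-- The ring of Gaussian integers `ℤ[i]`, viewed as an additive subgroup of `ℂ`. -/
noncomputable def gaussianIntegers : AddSubgroup ℂ :=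
  (Subring.closure {Complex.I}).toAddSubgroup

/-- For a complex number `z`, the additive subgroup `z·ℤ[i]` of `ℂ`. -/
noncomputable def zMulGaussianIntegers (z : ℂ) : AddSubgroup ℂ :=
  AddSubgroup.map (AddMonoidHom.mulLeft z) gaussianIntegers

lemma mem_gaussianIntegers {x : ℂ} : x ∈ gaussianIntegers ↔ ∃ g : GaussianInt, toComplex g = x := by
  have h : Subring.closure {Complex.I} = toComplex.range := by
    apply le_antisymm
    · rw [Subring.closure_le]
      rintro y rfl
      exact ⟨⟨0, 1⟩, by simp [toComplex_def']⟩
    · rintro y ⟨g, rfl⟩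
      rw [toComplex_def]
      exact add_mem (intCast_mem _ _)
        (mul_mem (intCast_mem _ _) (Subring.subset_closure rfl))
  constructor
  · intro hx
    have hx' : x ∈ Subring.closure {Complex.I} := hx
    rw [h] at hx'
    exact hx'
  · rintro ⟨g, rfl⟩
    show toComplex g ∈ Subring.closure {Complex.I}
    rw [h]; exact ⟨g, rfl⟩

lemma mem_zMulGaussianIntegers {z x : ℂ} :
    x ∈ zMulGaussianIntegers z ↔ ∃ g : GaussianInt, z * toComplex g = x := by
  constructor
  · rintro ⟨y, hy, rfl⟩
    obtain ⟨g, rfl⟩ := mem_gaussianIntegers.mp hy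
    exact ⟨g, rfl⟩
  · rintro ⟨g, rfl⟩
    exact ⟨toComplex g, mem_gaussianIntegers.mpr ⟨g, rfl⟩, rfl⟩

lemma gaussian_inf_eq (α β : GaussianInt) (hcop : IsCoprime α β) (hβ : β ≠ 0) :
    gaussianIntegers ⊓ zMulGaussianIntegers (toComplex α / toComplex β) =
        zMulGaussianIntegers (toComplex α) := by
  have hβC : toComplex β ≠ 0 := by rwa [Ne, toComplex_eq_zero]
  ext x
  simp only [AddSubgroup.mem_inf, mem_gaussianIntegers, mem_zMulGaussianIntegers]
  constructor
  · rintro ⟨⟨g, rfl⟩, ⟨h, hh⟩⟩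
    have key : g * β = α * h := by
      apply toComplex_injective
      push_cast [toComplex_mul]
      field_simp at hh
      linear_combination -hh
    have hdvd : β ∣ h := hcop.symm.dvd_of_dvd_mul_left ⟨g, by linear_combination -key⟩
    obtain ⟨k, rfl⟩ := hdvd
    refine ⟨k, ?_⟩
    rw [← hh, toComplex_mul]
    field_simp
  · rintro ⟨k, rfl⟩
    refine ⟨⟨α * k, by rw [toComplex_mul]⟩, ⟨β * k, ?_⟩⟩
    rw [toComplex_mul]
    field_simp

noncomputable def gaussEquivFun : GaussianInt ≃ₗ[ℤ] (Fin 2 → ℤ) where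
  toFun z := ![z.re, z.im]
  invFun f := ⟨f 0, f 1⟩
  left_inv z := by ext <;> simp
  right_inv f := by ext i; fin_cases i <;> simp
  map_add' a b := by ext i; fin_cases i <;> simp
  map_smul' n a := by ext i; fin_cases i <;> simp

noncomputable def gaussBasis : Module.Basis (Fin 2) ℤ GaussianInt := Module.Basis.ofEquivFun gaussEquivFun

instance : Module.Free ℤ GaussianInt := Module.Free.of_basis gaussBasis
instance : Module.Finite ℤ GaussianInt := Module.Finite.of_basis gaussBasis

lemma algNorm_eq (α : GaussianInt) : Algebra.norm ℤ α = Zsqrtd.norm α := by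
  rw [Algebra.norm_eq_matrix_det gaussBasis, Matrix.det_fin_two]
  simp [Algebra.leftMulMatrix_eq_repr_mul, gaussBasis, gaussEquivFun, Zsqrtd.norm,
    Zsqrtd.re_mul, Zsqrtd.im_mul]

lemma gaussian_relindex (α : GaussianInt) (m : ℕ) (hα : Zsqrtd.norm α = (m : ℤ)) :
    AddSubgroup.relIndex (zMulGaussianIntegers (toComplex α)) gaussianIntegers = m := by
  set φ : GaussianInt →+ ℂ := toComplex.toAddMonoidHom with hφ
  have hmap : gaussianIntegers = AddSubgroup.map φ ⊤ := by
    ext x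
    simp only [AddSubgroup.mem_map, AddSubgroup.mem_top, true_and, mem_gaussianIntegers]
    rfl
  have hcomap : AddSubgroup.comap φ (zMulGaussianIntegers (toComplex α)) =
      (Ideal.span {α}).toAddSubgroup := by
    ext g
    simp only [AddSubgroup.mem_comap, mem_zMulGaussianIntegers, Submodule.mem_toAddSubgroup,
      Ideal.mem_span_singleton]
    constructor
    · rintro ⟨k, hk⟩
      exact ⟨k, (toComplex_inj.mp (by rw [toComplex_mul]; exact hk.symm))⟩
    · rintro ⟨k, rfl⟩
      exact ⟨k, (toComplex_mul _ _).symm⟩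
  rw [hmap, ← AddSubgroup.relIndex_comap, hcomap, AddSubgroup.relIndex_top_right]
  have hidx : (Ideal.span {α}).toAddSubgroup.index = Nat.card (GaussianInt ⧸ Ideal.span {α}) := rfl
  rw [hidx, ← Submodule.cardQuot_apply, ← Ideal.absNorm_apply, Ideal.absNorm_span_singleton,
    algNorm_eq, hα]
  simp

/-- If `α` and `β` are coprime Gaussian integers with equal norms
`norm α = norm β = m`, and `z = α/β`, then `ℤ[i] ∩ z·ℤ[i] = α·ℤ[i]`, and this
subgroup has index `m` in `ℤ[i]`. -/
theorem gaussian_coincidence_sublattice (α β : GaussianInt) (hcop : IsCoprime α β)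
    (m : ℕ) (hα : Zsqrtd.norm α = (m : ℤ)) (hβ : Zsqrtd.norm β = (m : ℤ)) :
    gaussianIntegers ⊓ zMulGaussianIntegers (toComplex α / toComplex β) =
        zMulGaussianIntegers (toComplex α) ∧
      AddSubgroup.relIndex
        (gaussianIntegers ⊓ zMulGaussianIntegers (toComplex α / toComplex β))
        gaussianIntegers = m := by
  have hβ0 : β ≠ 0 := by
    rintro rfl
    have hm : (m : ℤ) = 0 := by simpa using hβ.symm
    have hα0 : α = 0 := by
      rw [← Zsqrtd.norm_eq_zero_iff (by norm_num : (-1 : ℤ) < 0)]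
      rw [hα, hm]
    rw [hα0] at hcop
    exact (not_isCoprime_zero_zero hcop)
  have heq := gaussian_inf_eq α β hcop hβ0
  refine ⟨heq, ?_⟩
  rw [heq]
  exact gaussian_relindex α m hα
end

section
/- For every positive integer m, the number of primitive integral solutions of a² + b² = m², i.e. the number of pairs (a,b) ∈ ℤ×ℤ with a² + b² = m² and gcd(a,b) = 1, equals 4·d*(m) if every prime factor of m is congruent to 1 modulo 4, and equals 0 otherwise. -/
open scoped Classical

/-- The number of squarefree divisors of `m`. -/
def numSquarefreeDivisors (m : ℕ) : ℕ :=
  (m.divisors.filter Squarefree).card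

open Zsqrtd in

lemma sqfree_div_card (m : ℕ) (hm : m ≠ 0) :
    numSquarefreeDivisors m = 2 ^ m.primeFactors.card := by
  have h := Nat.divisors_filter_squarefree hm
  have h2 := congrArg Multiset.card h
  rw [Multiset.card_map] at h2
  rw [numSquarefreeDivisors, Finset.card_def, h2, ← Finset.card_def, Finset.card_powerset]
  congr 1
  rw [Nat.factors_eq]
  simp [← Nat.toFinset_factors]


lemma card_sqrt_prime (p : ℕ) (hp : p.Prime) (h4 : p % 4 = 1) :
    Nat.card {x : ZMod p // x ^ 2 = -1} = 2 := by
  haveI : Fact p.Prime := ⟨hp⟩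
  obtain ⟨c, hc⟩ : IsSquare (-1 : ZMod p) :=
    (ZMod.exists_sq_eq_neg_one_iff (p := p)).2 (by omega)
  have hc2 : c ^ 2 = -1 := by rw [sq]; exact hc.symm
  have hp2 : p ≠ 2 := by omega
  have h2z : (2 : ZMod p) ≠ 0 := by
    intro h
    have : ((2 : ℕ) : ZMod p) = 0 := by push_cast; exact h
    rw [ZMod.natCast_eq_zero_iff] at this
    exact hp2 ((Nat.prime_dvd_prime_iff_eq hp Nat.prime_two).mp this)
  have hc0 : c ≠ 0 := by intro h; rw [h] at hc2; simp at hc2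
  have hcc : c ≠ -c := by
    intro h
    have h2 : (2 : ZMod p) * c = 0 := by linear_combination h
    rcases mul_eq_zero.mp h2 with h' | h'
    · exact h2z h'
    · exact hc0 h'
  have hset : {x : ZMod p | x ^ 2 = -1} = {c, -c} := by
    ext x
    simp only [Set.mem_setOf_eq, Set.mem_insert_iff, Set.mem_singleton_iff]
    constructor
    · intro hx
      have : (x - c) * (x + c) = 0 := by linear_combination hx - hc2
      rcases mul_eq_zero.mp this with h' | h'
      · left; linear_combination h'
      · right; linear_combination h'
    · rintro (rfl | rfl)
      · exact hc2
      · linear_combination hc2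
  have : Nat.card {x : ZMod p // x ^ 2 = -1} = ({c, -c} : Set (ZMod p)).ncard := by
    rw [← hset]; rw [← Nat.card_coe_set_eq]; rfl
  rw [this, Set.ncard_pair hcc]


lemma sqrt_step (p j : ℕ) (hp : p.Prime) (h4 : p % 4 = 1) (hj : j ≠ 0) :
    Nat.card {x : ZMod (p^(j+1)) // x ^ 2 = -1} =
      Nat.card {x : ZMod (p^j) // x ^ 2 = -1} := by
  haveI : Fact p.Prime := ⟨hp⟩
  have hpz : (p : ℤ) ≠ 0 := by exact_mod_cast hp.pos.ne'
  have hdvd : p ^ j ∣ p ^ (j+1) := pow_dvd_pow p (Nat.le_succ j)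
  -- helper: x^2 = -1 iff p^k ∣ X^2+1 for integer representative
  have hiff : ∀ (k : ℕ) (X : ℤ), ((X : ZMod (p^k)) ^ 2 = -1) ↔ ((p:ℤ)^k ∣ X^2 + 1) := by
    intro k X
    rw [← sub_eq_zero, sub_neg_eq_add]
    push_cast
    rw [show ((X:ZMod (p^k))^2 + 1) = (((X^2+1 : ℤ)) : ZMod (p^k)) by push_cast; ring]
    rw [ZMod.intCast_zmod_eq_zero_iff_dvd]
    push_cast
    rfl
  let F : {x : ZMod (p^(j+1)) // x ^ 2 = -1} → {y : ZMod (p^j) // y ^ 2 = -1} :=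
    fun x => ⟨ZMod.castHom hdvd (ZMod (p^j)) x.1, by
      have := x.2
      calc (ZMod.castHom hdvd (ZMod (p^j)) x.1) ^ 2
          = ZMod.castHom hdvd (ZMod (p^j)) (x.1 ^ 2) := by rw [map_pow]
        _ = -1 := by rw [this, map_neg, map_one]⟩
  have hbij : Function.Bijective F := by
    constructor
    · rintro ⟨x₁, h₁⟩ ⟨x₂, h₂⟩ h
      simp only [F, Subtype.mk.injEq] at h ⊢
      obtain ⟨X₁, rfl⟩ := ZMod.intCast_surjective x₁
      obtain ⟨X₂, rfl⟩ := ZMod.intCast_surjective x₂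
      rw [map_intCast, map_intCast] at h
      rw [ZMod.intCast_eq_intCast_iff'] at h ⊢
      push_cast at h ⊢
      have hj1 : (p:ℤ)^j ∣ X₁ - X₂ := Int.ModEq.dvd h.symm
      have hd1 : (p:ℤ)^(j+1) ∣ X₁^2 + 1 := (hiff _ _).1 h₁
      have hd2 : (p:ℤ)^(j+1) ∣ X₂^2 + 1 := (hiff _ _).1 h₂
      have hprod : (p:ℤ)^(j+1) ∣ (X₁ - X₂) * (X₁ + X₂) := by
        have := dvd_sub hd1 hd2
        have e : X₁^2 + 1 - (X₂^2 + 1) = (X₁ - X₂) * (X₁ + X₂) := by ring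
        rwa [e] at this
      have hnd : ¬ ((p:ℤ) ∣ X₁ + X₂) := by
        intro hsum
        have hpj : (p:ℤ) ∣ X₁ - X₂ := dvd_trans (dvd_pow_self _ hj) hj1
        have h2X : (p:ℤ) ∣ 2 * X₁ := by
          have := dvd_add hsum hpj
          rwa [show X₁ + X₂ + (X₁ - X₂) = 2 * X₁ by ring] at this
        have hX1 : (p:ℤ) ∣ X₁ := by
          rcases ((Nat.prime_iff_prime_int.1 hp).dvd_mul.mp h2X) with h' | h'
          · exfalso
            have : p ∣ 2 := by exact_mod_cast Int.ofNat_dvd.mp (by exact_mod_cast h')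
            have := (Nat.prime_dvd_prime_iff_eq hp Nat.prime_two).mp this
            omega
          · exact h'
        have hone : (p:ℤ) ∣ 1 := by
          have hpd : (p:ℤ) ∣ X₁^2 + 1 := dvd_trans (dvd_pow_self _ (Nat.succ_ne_zero j)) hd1
          have : (p:ℤ) ∣ X₁^2 := Dvd.dvd.mul_right hX1 X₁ |>.trans (by rw [sq])
          have := dvd_sub hpd this
          simpa using this
        have := Int.le_of_dvd one_pos hone
        have := hp.two_le
        omega
      have hcop : IsCoprime ((p:ℤ)^(j+1)) (X₁ + X₂) :=
        IsCoprime.pow_left ((Irreducible.coprime_iff_not_dvd (Nat.prime_iff_prime_int.1 hp).irreducible).2 hnd)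
      have : (p:ℤ)^(j+1) ∣ X₁ - X₂ := hcop.dvd_of_dvd_mul_right hprod
      exact Int.modEq_iff_dvd.2 (by rw [show X₂ - X₁ = -(X₁ - X₂) by ring]; exact dvd_neg.mpr this)
    · rintro ⟨y, hy⟩
      obtain ⟨Y, rfl⟩ := ZMod.intCast_surjective y
      have hYd : (p:ℤ)^j ∣ Y^2 + 1 := (hiff _ _).1 hy
      obtain ⟨c, hc⟩ := id hYd
      have hpY : ¬ ((p:ℤ) ∣ 2 * Y) := by
        intro h2Y
        have hp2 : ¬ ((p:ℤ) ∣ 2) := by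
          intro h'
          have : p ∣ 2 := by exact_mod_cast Int.ofNat_dvd.mp (by exact_mod_cast h')
          have := (Nat.prime_dvd_prime_iff_eq hp Nat.prime_two).mp this
          omega
        have hY : (p:ℤ) ∣ Y := by
          rcases (Nat.prime_iff_prime_int.1 hp).dvd_mul.mp h2Y with h' | h'
          · exact absurd h' hp2
          · exact h'
        have hpd : (p:ℤ) ∣ Y^2 + 1 := dvd_trans (dvd_pow_self _ hj) hYd
        have : (p:ℤ) ∣ Y^2 := by rw [sq]; exact hY.mul_right Y
        have := dvd_sub hpd this
        simp only [add_sub_cancel_left] at this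
        have := Int.le_of_dvd one_pos this
        have := hp.two_le
        omega
      have hcop : IsCoprime (2 * Y) ((p:ℤ)) :=
        ((Irreducible.coprime_iff_not_dvd (Nat.prime_iff_prime_int.1 hp).irreducible).2 hpY).symm
      obtain ⟨α, β, hbez⟩ := hcop
      set X : ℤ := Y - c * α * (p:ℤ)^j with hX
      have hq : (p:ℤ)^(j+1) = (p:ℤ)^j * (p:ℤ) := by rw [pow_succ]
      have hjj : (p:ℤ)^j * (p:ℤ)^j = (p:ℤ)^(j+1) * (p:ℤ)^(j-1) := by
        rw [← pow_add, ← pow_add]; congr 1; omega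
      have key : X^2 + 1 = (p:ℤ)^(j+1) * (c*β + c^2*α^2*(p:ℤ)^(j-1)) := by
        have hY' : Y^2 + 1 = (p:ℤ)^j * c := hc
        linear_combination hY' + c^2*α^2*hjj - c*((p:ℤ)^j)*hbez - c*β*hq
      refine ⟨⟨(X : ZMod (p^(j+1))), (hiff _ _).2 ⟨_, key⟩⟩, ?_⟩
      simp only [F, Subtype.mk.injEq, map_intCast]
      rw [ZMod.intCast_eq_intCast_iff']
      push_cast
      have : (p:ℤ)^j ∣ Y - X := ⟨c * α, by rw [hX]; ring⟩
      exact Int.modEq_iff_dvd.2 this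
  exact Nat.card_eq_of_bijective F hbij


lemma card_sqrt_prime_pow (p k : ℕ) (hp : p.Prime) (h4 : p % 4 = 1) (hk : k ≠ 0) :
    Nat.card {x : ZMod (p^k) // x ^ 2 = -1} = 2 := by
  induction k with
  | zero => exact absurd rfl hk
  | succ j ih =>
    rcases Nat.eq_zero_or_pos j with rfl | hj
    · rw [show p ^ 1 = p from pow_one p]
      exact card_sqrt_prime p hp h4
    · rw [sqrt_step p j hp h4 hj.ne']
      exact ih hj.ne'

lemma card_sqrt_mul (a b : ℕ) (h : a.Coprime b) :
    Nat.card {x : ZMod (a*b) // x ^ 2 = -1} =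
      Nat.card {x : ZMod a // x ^ 2 = -1} * Nat.card {x : ZMod b // x ^ 2 = -1} := by
  have e := ZMod.chineseRemainder h
  have E : {x : ZMod (a*b) // x ^ 2 = -1} ≃
      {y : ZMod a × ZMod b // y.1 ^ 2 = -1 ∧ y.2 ^ 2 = -1} := by
    refine (Equiv.subtypeEquiv e.toEquiv ?_)
    intro x
    constructor
    · intro hx
      have h1 : (e x) ^ 2 = -1 := by
        rw [← map_pow, hx, map_neg, map_one]
      constructor
      · exact congrArg Prod.fst h1
      · exact congrArg Prod.snd h1
    · rintro ⟨h1, h2⟩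
      have : (e x) ^ 2 = -1 := Prod.ext h1 h2
      have := congrArg e.symm this
      rwa [← map_pow, RingEquiv.symm_apply_apply, map_neg, map_one] at this
  rw [Nat.card_congr E, Nat.card_congr (Equiv.subtypeProdEquivProd
    (p := fun y : ZMod a => y ^ 2 = -1) (q := fun y : ZMod b => y ^ 2 = -1)), Nat.card_prod]


lemma card_sqrt_sq (m : ℕ) (hm : m ≠ 0) (h : ∀ p, p.Prime → p ∣ m → p % 4 = 1) :
    Nat.card {x : ZMod (m^2) // x ^ 2 = -1} = 2 ^ m.primeFactors.card := by
  induction m using Nat.strong_induction_on with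
  | _ m ih =>
  rcases eq_or_ne m 1 with rfl | hm1
  · have hone : (1:ℕ)^2 = 1 := one_pow 2
    have : Nat.card {x : ZMod (1^2) // x ^ 2 = -1} = 1 := by
      rw [hone, Nat.card_eq_one_iff_unique]
      haveI : Subsingleton (ZMod 1) := by infer_instance
      refine ⟨⟨fun a b => Subtype.ext (Subsingleton.elim _ _)⟩, ⟨0, by decide⟩⟩
    rw [this]; simp
  · set p := m.minFac with hpdef
    have hp : p.Prime := Nat.minFac_prime hm1
    have hpdvd : p ∣ m := Nat.minFac_dvd m
    have h4 : p % 4 = 1 := h p hp hpdvd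
    set k := m.factorization p with hk
    have hk0 : k ≠ 0 := by
      rw [hk]
      simpa [Nat.Prime.factorization_pos_of_dvd hp hm hpdvd] using
        (Nat.Prime.factorization_pos_of_dvd hp hm hpdvd).ne'
    set r := m / p ^ k with hr
    have hmr : p ^ k * r = m := Nat.ordProj_mul_ordCompl_eq_self m p
    have hr0 : r ≠ 0 := by
      intro h0; rw [h0, mul_zero] at hmr; exact hm hmr.symm
    have hpr : ¬ p ∣ r := Nat.not_dvd_ordCompl hp hm
    have hrm : r < m := by
      have hpk : 1 < p ^ k := Nat.one_lt_pow hk0 hp.one_lt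
      calc r = 1 * r := (one_mul r).symm
        _ < p ^ k * r := by
          exact (Nat.mul_lt_mul_right (Nat.pos_of_ne_zero hr0)).mpr hpk
        _ = m := hmr
    have hcop : Nat.Coprime (p ^ (2*k)) (r ^ 2) :=
      (hp.coprime_iff_not_dvd.2 hpr).pow _ _
    have hm2 : m ^ 2 = p ^ (2*k) * r ^ 2 := by
      rw [← hmr, mul_pow, ← pow_mul]; ring_nf
    have hrec := ih r hrm hr0 (fun q hq hqd => h q hq (hqd.trans ⟨p ^ k, by rw [← hmr]; ring⟩))
    rw [hm2, card_sqrt_mul _ _ hcop, card_sqrt_prime_pow p (2*k) hp h4 (by omega), hrec]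
    have hfac : m.primeFactors = insert p r.primeFactors := by
      rw [← hmr, Nat.primeFactors_mul (pow_ne_zero _ hp.pos.ne') hr0,
        Nat.primeFactors_pow _ hk0, hp.primeFactors]
      ext q; simp [Finset.mem_union, Finset.mem_insert]
    rw [hfac, Finset.card_insert_of_notMem (by simp [Nat.mem_primeFactors]; intro _ hd; exact absurd hd hpr)]
    ring


open Zsqrtd

lemma exists_rep (n : ℕ) (hn : n ≠ 0) (hodd : Odd n) (s : ℤ) (hs : (n:ℤ) ∣ s^2 + 1) :
    ∃ a b : ℤ, a^2 + b^2 = (n:ℤ) ∧ Int.gcd a b = 1 ∧ (n:ℤ) ∣ a - s*b := by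
  have sdvd : ∀ {a b : GaussianInt}, a ∣ b → star a ∣ star b := by
    rintro a b ⟨t, rfl⟩
    exact ⟨star t, by rw [star_mul, mul_comm]⟩
  set N : GaussianInt := ((n:ℤ) : GaussianInt) with hN
  set w : GaussianInt := ⟨s, 1⟩ with hw
  set d : GaussianInt := EuclideanDomain.gcd N w with hd
  have hd1 : d ∣ N := EuclideanDomain.gcd_dvd_left N w
  have hd2 : d ∣ w := EuclideanDomain.gcd_dvd_right N w
  have hsN : star N = N := by rw [hN]; exact star_intCast _
  have hsw : star w = ⟨s, -1⟩ := by rw [hw]; exact star_mk s 1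
  obtain ⟨c, hc⟩ := hs
  have hwsw : w * star w = N * ((c:ℤ) : GaussianInt) := by
    rw [hN, ← Int.cast_mul, hw, hsw]
    ext
    · simp only [re_mul, re_intCast]
      linear_combination hc
    · simp only [im_mul, im_intCast]
      ring
  set A := EuclideanDomain.gcdA N w with hA
  set B := EuclideanDomain.gcdB N w with hB
  have hb : d = N * A + w * B := EuclideanDomain.gcd_eq_gcd_ab N w
  have hsd : star d = star A * N + star B * star w := by
    rw [hb, star_add, star_mul, star_mul, hsN]
  have hNdd : N ∣ d * star d := by
    rw [hsd]
    nth_rewrite 1 [hb]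
    have expand : (N * A + w * B) * (star A * N + star B * star w) =
        N * (A * star A * N + A * star B * star w + star A * w * B) +
          (w * star w) * (B * star B) := by ring
    rw [expand, hwsw]
    exact dvd_add (dvd_mul_right N _) ((dvd_mul_right N _).mul_right _)
  have hnormd : ((d.norm : ℤ) : GaussianInt) = d * star d := norm_eq_mul_conj d
  have hcop : IsCoprime d (star d) := by
    rw [← EuclideanDomain.gcd_isUnit_iff]
    have hg1 : EuclideanDomain.gcd d (star d) ∣ w :=
      (EuclideanDomain.gcd_dvd_left d (star d)).trans hd2
    have hg2 : EuclideanDomain.gcd d (star d) ∣ star w :=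
      (EuclideanDomain.gcd_dvd_right d (star d)).trans (sdvd hd2)
    have hg4 : EuclideanDomain.gcd d (star d) ∣ (4 : GaussianInt) := by
      have h1 : EuclideanDomain.gcd d (star d) ∣ w - star w := dvd_sub hg1 hg2
      have h2 : w - star w = ⟨0, 2⟩ := by
        rw [hw, hsw]; ext <;> simp
      have h3 : (⟨0,2⟩ : GaussianInt) ∣ 4 := ⟨⟨0,-2⟩, by ext <;> simp [re_mul, im_mul]⟩
      exact (h2 ▸ h1).trans h3
    have hgN : EuclideanDomain.gcd d (star d) ∣ N :=
      (EuclideanDomain.gcd_dvd_left d (star d)).trans hd1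
    have hc4n : IsCoprime (4 : ℤ) ((n:ℤ)) := by
      rw [Int.isCoprime_iff_gcd_eq_one]
      have h2n : ¬ (2 ∣ n) := by rcases hodd with ⟨t, ht⟩; omega
      have hcop2 : Nat.Coprime 4 n := by
        have := ((Nat.Prime.coprime_iff_not_dvd Nat.prime_two).2 h2n).pow_left 2
        simpa using this
      simpa [Int.gcd] using hcop2
    have hc4N : IsCoprime (4 : GaussianInt) N := by
      have := hc4n.map (Int.castRingHom GaussianInt)
      simpa [hN] using this
    obtain ⟨u, v, huv⟩ := hc4N
    have : EuclideanDomain.gcd d (star d) ∣ 1 := by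
      rw [← huv]
      exact dvd_add (hg4.mul_left u) (hgN.mul_left v)
    exact isUnit_of_dvd_one this
  have hddN : d * star d ∣ N := hcop.mul_dvd hd1 (hsN ▸ sdvd hd1)
  have hdvd1 : (d.norm : ℤ) ∣ (n:ℤ) := by
    rw [← Zsqrtd.intCast_dvd_intCast (d := (-1:ℤ))]
    exact hnormd ▸ hddN
  have hdvd2 : (n:ℤ) ∣ d.norm := by
    rw [← Zsqrtd.intCast_dvd_intCast (d := (-1:ℤ))]
    exact hnormd ▸ hNdd
  have hnorm : d.norm = (n:ℤ) := by
    refine Int.dvd_antisymm (norm_nonneg (by norm_num) d) (by positivity) hdvd1 hdvd2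
  refine ⟨d.re, d.im, ?_, ?_, ?_⟩
  · have hnd := norm_def d
    rw [hnorm] at hnd
    linear_combination -hnd
  · have hgd : ((Int.gcd d.re d.im : ℤ) : GaussianInt) ∣ d := by
      rw [Zsqrtd.intCast_dvd]
      exact ⟨Int.gcd_dvd_left _ _, Int.gcd_dvd_right _ _⟩
    have hgw := hgd.trans hd2
    rw [Zsqrtd.intCast_dvd, hw] at hgw
    have h1 : (Int.gcd d.re d.im : ℤ) ∣ 1 := hgw.2
    exact Nat.dvd_one.mp (by exact_mod_cast h1)
  · obtain ⟨t, ht⟩ := hd2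
    have hNt : N ∣ star d * w := by
      rw [ht, show star d * (d * t) = (d * star d) * t by ring, ← hnormd, hnorm]
      exact Dvd.intro t rfl
    rw [hN, Zsqrtd.intCast_dvd] at hNt
    have h2 := hNt.2
    rw [hw] at h2
    simp only [im_mul, re_star, im_star] at h2
    convert h2 using 1
    ring


-- coprimality of coordinates with n
lemma coord_coprime (n : ℕ) (a b : ℤ) (heq : a^2 + b^2 = (n:ℤ))
    (hgcd : Int.gcd a b = 1) : Nat.Coprime b.natAbs n := by
  by_contra hne
  set g := Nat.gcd b.natAbs n with hg
  have hg1 : g ≠ 1 := hne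
  have hg0 : g ≠ 0 := by
    intro h0
    have hb0 : b.natAbs = 0 := Nat.eq_zero_of_gcd_eq_zero_left (hg ▸ h0)
    have hn0 : n = 0 := Nat.eq_zero_of_gcd_eq_zero_right (hg ▸ h0)
    rw [hn0] at heq
    have hb : b = 0 := Int.natAbs_eq_zero.mp hb0
    rw [hb] at heq hgcd
    push_cast at heq
    have ha : a = 0 := by nlinarith [sq_nonneg a]
    rw [ha] at hgcd
    simp [Int.gcd] at hgcd
  set q := g.minFac with hq
  have hqp : q.Prime := Nat.minFac_prime hg1
  have hqb : (q:ℤ) ∣ b := by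
    have h1 : q ∣ b.natAbs := hq ▸ (Nat.minFac_dvd g).trans (Nat.gcd_dvd_left _ _)
    exact Int.dvd_natAbs.mp (by exact_mod_cast h1)
  have hqn : (q:ℤ) ∣ (n:ℤ) := by
    have h1 : q ∣ n := hq ▸ (Nat.minFac_dvd g).trans (Nat.gcd_dvd_right _ _)
    exact_mod_cast h1
  have hqa : (q:ℤ) ∣ a := by
    have hqa2 : (q:ℤ) ∣ a * a := by
      have : (q:ℤ) ∣ a^2 := by
        have : a^2 = (n:ℤ) - b^2 := by linarith
        rw [this]
        exact dvd_sub hqn (by rw [sq]; exact hqb.mul_right b)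
      rwa [sq] at this
    rcases (Nat.prime_iff_prime_int.1 hqp).dvd_mul.mp hqa2 with h | h <;> exact h
  have : (q:ℤ) ∣ (Int.gcd a b : ℤ) := Int.dvd_coe_gcd hqa hqb
  rw [hgcd] at this
  have : q ∣ 1 := by exact_mod_cast this
  exact hqp.one_lt.ne' (Nat.dvd_one.mp this)

lemma main_count (n : ℕ) (hn : n ≠ 0) (hodd : Odd n) :
    {x : ℤ × ℤ | x.1 ^ 2 + x.2 ^ 2 = (n : ℤ) ∧ Int.gcd x.1 x.2 = 1}.Finite ∧
    {x : ℤ × ℤ | x.1 ^ 2 + x.2 ^ 2 = (n : ℤ) ∧ Int.gcd x.1 x.2 = 1}.ncard =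
      4 * Nat.card {s : ZMod n // s ^ 2 = -1} := by
  haveI : NeZero n := ⟨hn⟩
  set S := {x : ℤ × ℤ | x.1 ^ 2 + x.2 ^ 2 = (n : ℤ) ∧ Int.gcd x.1 x.2 = 1} with hS
  have hfin : S.Finite := by
    apply Set.Finite.subset (Set.finite_Icc ((-(n:ℤ), -(n:ℤ))) (((n:ℤ), (n:ℤ))))
    rintro ⟨a, b⟩ ⟨heq, -⟩
    simp only [Set.mem_Icc, Prod.mk_le_mk] at *
    constructor <;> constructor <;> nlinarith [sq_nonneg a, sq_nonneg b, sq_nonneg (a-b),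
      Nat.pos_of_ne_zero hn, (by exact_mod_cast Nat.pos_of_ne_zero hn : (0:ℤ) < (n:ℤ))]
  refine ⟨hfin, ?_⟩
  -- units
  have hmem_unit : ∀ x : ℤ × ℤ, x ∈ S → IsUnit ((x.2 : ZMod n)) ∧ IsUnit ((x.1 : ZMod n)) := by
    rintro ⟨a, b⟩ ⟨heq, hgcd⟩
    have hIsU : ∀ c : ℤ, Nat.Coprime c.natAbs n → IsUnit ((c : ZMod n)) := by
      intro c hc
      have := (ZMod.isUnit_iff_coprime c.natAbs n).2 hc
      rcases Int.natAbs_eq c with h | h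
      · rwa [h, Int.cast_natCast]
      · rw [h, Int.cast_neg, Int.cast_natCast]
        exact this.neg
    refine ⟨hIsU b (coord_coprime n a b heq hgcd), hIsU a (coord_coprime n b a (by linarith) (by rwa [Int.gcd_comm]))⟩
  set F : ℤ × ℤ → ZMod n := fun x => (x.1 : ZMod n) * (x.2 : ZMod n)⁻¹ with hF
  set T : Finset (ZMod n) := Finset.univ.filter (fun t : ZMod n => t ^ 2 = -1) with hT
  -- key fact: for x in S, F x = t ↔ x.1 = t * x.2  (in ZMod n)
  have hFt : ∀ x : ℤ × ℤ, x ∈ S → ∀ t : ZMod n,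
      (F x = t ↔ (x.1 : ZMod n) = t * (x.2 : ZMod n)) := by
    rintro ⟨a, b⟩ hx t
    obtain ⟨hub, -⟩ := hmem_unit _ hx
    constructor
    · intro h
      rw [← h, hF]
      simp only
      rw [mul_assoc, ZMod.inv_mul_of_unit _ hub, mul_one]
    · intro h
      rw [hF]; simp only
      rw [h, mul_assoc, ZMod.mul_inv_of_unit _ hub, mul_one]
  -- the equation in ZMod n
  have hzmod : ∀ x : ℤ × ℤ, x ∈ S → ((x.1 : ZMod n))^2 + ((x.2 : ZMod n))^2 = 0 := by
    rintro ⟨a, b⟩ ⟨heq, -⟩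
    have := congrArg (fun z : ℤ => (z : ZMod n)) heq
    push_cast at this
    simpa using this
  -- F maps S into T
  have hmapsto : ∀ x ∈ hfin.toFinset, F x ∈ T := by
    intro x hx
    rw [Set.Finite.mem_toFinset] at hx
    obtain ⟨hub, hua⟩ := hmem_unit x hx
    rw [hT, Finset.mem_filter]
    refine ⟨Finset.mem_univ _, ?_⟩
    have h0 := hzmod x hx
    rw [hF]
    simp only
    rw [mul_pow]
    have hbb : ((x.2 : ZMod n))^2 * (((x.2 : ZMod n))⁻¹)^2 = 1 := by
      rw [← mul_pow, ZMod.mul_inv_of_unit _ hub, one_pow]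
    have ha2 : ((x.1 : ZMod n))^2 = -((x.2 : ZMod n))^2 := by linear_combination h0
    rw [ha2, neg_mul, hbb]
  -- each fiber has exactly 4 elements
  have hfiber : ∀ t ∈ T, (hfin.toFinset.filter (fun x => F x = t)).card = 4 := by
    intro t ht
    rw [hT, Finset.mem_filter] at ht
    obtain ⟨-, ht2⟩ := ht
    obtain ⟨s, rfl⟩ := ZMod.intCast_surjective t
    have hs : (n:ℤ) ∣ s^2 + 1 := by
      rw [← ZMod.intCast_zmod_eq_zero_iff_dvd]
      push_cast
      rw [ht2]
      ring
    obtain ⟨a, b, habn, hgcd, hcong⟩ := exists_rep n hn hodd s hs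
    have hab_mem : (a, b) ∈ S := ⟨habn, hgcd⟩
    have hcongz : (a : ZMod n) = (s : ZMod n) * (b : ZMod n) := by
      have : ((a - s*b : ℤ) : ZMod n) = 0 := (ZMod.intCast_zmod_eq_zero_iff_dvd _ _).2 hcong
      push_cast at this
      linear_combination this
    have hne00 : ¬(a = 0 ∧ b = 0) := by
      rintro ⟨rfl, rfl⟩
      simp [Int.gcd] at hgcd
    -- membership of the four rotations
    have hrot : ∀ c d : ℤ, (c, d) ∈ S → ((-d, c) : ℤ × ℤ) ∈ S := by
      rintro c d ⟨h1, h2⟩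
      constructor
      · simp only; ring_nf; ring_nf at h1; linarith
      · simp only [Int.gcd] at h2 ⊢
        rw [Int.natAbs_neg, Nat.gcd_comm]
        exact h2
    have h1 : ((-b, a) : ℤ × ℤ) ∈ S := hrot a b hab_mem
    have h2 : ((-a, -b) : ℤ × ℤ) ∈ S := hrot (-b) a h1
    have h3 : ((b, -a) : ℤ × ℤ) ∈ S := by
      have := hrot (-a) (-b) h2
      simpa using this
    -- F values of the four rotations
    have hFab : F (a, b) = (s : ZMod n) := (hFt _ hab_mem _).2 hcongz
    have hF1 : F (-b, a) = (s : ZMod n) := by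
      refine (hFt _ h1 _).2 ?_
      push_cast
      rw [hcongz]
      linear_combination (-(b : ZMod n)) * ht2
    have hF2 : F (-a, -b) = (s : ZMod n) := by
      refine (hFt _ h2 _).2 ?_
      push_cast
      rw [hcongz]
      ring
    have hF3 : F (b, -a) = (s : ZMod n) := by
      refine (hFt _ h3 _).2 ?_
      push_cast
      rw [hcongz]
      linear_combination ((b : ZMod n)) * ht2
    have hset : hfin.toFinset.filter (fun x => F x = (s : ZMod n)) =
        {(a,b), (-b,a), (-a,-b), (b,-a)} := by
      ext ⟨c, d⟩
      simp only [Finset.mem_filter, Set.Finite.mem_toFinset, Finset.mem_insert,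
        Finset.mem_singleton]
      constructor
      · rintro ⟨hcd_mem, hFcd⟩
        have hcdz : (c : ZMod n) = (s : ZMod n) * (d : ZMod n) := (hFt _ hcd_mem _).1 hFcd
        obtain ⟨hcd_eq, hcd_gcd⟩ := hcd_mem
        simp only at hcd_eq
        -- integer congruences
        have hd1 : (n:ℤ) ∣ a*d - b*c := by
          rw [← ZMod.intCast_zmod_eq_zero_iff_dvd]
          push_cast
          rw [hcongz, hcdz]
          ring
        have hd2 : (n:ℤ) ∣ a*c + b*d := by
          rw [← ZMod.intCast_zmod_eq_zero_iff_dvd]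
          push_cast
          rw [hcongz, hcdz]
          linear_combination ((b:ZMod n) * (d : ZMod n)) * ht2
        obtain ⟨y, hy⟩ := hd1
        obtain ⟨x, hx⟩ := hd2
        have hnz : (n:ℤ) ≠ 0 := by exact_mod_cast hn
        have hxy : x^2 + y^2 = 1 := by
          have hid : ((n:ℤ)*x)^2 + ((n:ℤ)*y)^2 = (a^2+b^2) * (c^2+d^2) := by
            rw [← hx, ← hy]; ring
          rw [habn, hcd_eq] at hid
          have : (n:ℤ)^2 * (x^2 + y^2) = (n:ℤ)^2 * 1 := by ring_nf; ring_nf at hid; linarith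
          exact mul_left_cancel₀ (pow_ne_zero 2 hnz) this
        have hc_eq : c = a*x - b*y := by
          have h5 : (n:ℤ) * c = (n:ℤ) * (a*x - b*y) := by
            have : a*(a*c+b*d) - b*(a*d-b*c) = (a^2+b^2)*c := by ring
            rw [hx, hy, habn] at this
            linarith [this]
          exact mul_left_cancel₀ hnz h5
        have hd_eq : d = b*x + a*y := by
          have h5 : (n:ℤ) * d = (n:ℤ) * (b*x + a*y) := by
            have : b*(a*c+b*d) + a*(a*d-b*c) = (a^2+b^2)*d := by ring
            rw [hx, hy, habn] at this
            linarith [this]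
          exact mul_left_cancel₀ hnz h5
        obtain ⟨hxl, hxr⟩ : -1 ≤ x ∧ x ≤ 1 :=
          abs_le.mp (abs_le_one_iff_mul_self_le_one.mpr (by nlinarith [sq_nonneg y]))
        obtain ⟨hyl, hyr⟩ : -1 ≤ y ∧ y ≤ 1 :=
          abs_le.mp (abs_le_one_iff_mul_self_le_one.mpr (by nlinarith [sq_nonneg x]))
        have hcases : (x = 1 ∧ y = 0) ∨ (x = -1 ∧ y = 0) ∨ (x = 0 ∧ y = 1) ∨
            (x = 0 ∧ y = -1) := by
          interval_cases x <;> interval_cases y <;> revert hxy <;> norm_num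
        rcases hcases with ⟨rfl, rfl⟩ | ⟨rfl, rfl⟩ | ⟨rfl, rfl⟩ | ⟨rfl, rfl⟩ <;>
          simp only [Prod.mk.injEq] <;> omega
      · rintro (h | h | h | h) <;> rw [h]
        · exact ⟨hab_mem, hFab⟩
        · exact ⟨h1, hF1⟩
        · exact ⟨h2, hF2⟩
        · exact ⟨h3, hF3⟩
    rw [hset]
    -- cardinality of the explicit 4-element set
    have d1 : ((a,b) : ℤ×ℤ) ≠ (-b,a) := by
      intro h; rw [Prod.mk.injEq] at h; exact hne00 ⟨by omega, by omega⟩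
    have d2 : ((a,b) : ℤ×ℤ) ≠ (-a,-b) := by
      intro h; rw [Prod.mk.injEq] at h; exact hne00 ⟨by omega, by omega⟩
    have d3 : ((a,b) : ℤ×ℤ) ≠ (b,-a) := by
      intro h; rw [Prod.mk.injEq] at h; exact hne00 ⟨by omega, by omega⟩
    have d4 : ((-b,a) : ℤ×ℤ) ≠ (-a,-b) := by
      intro h; rw [Prod.mk.injEq] at h; exact hne00 ⟨by omega, by omega⟩
    have d5 : ((-b,a) : ℤ×ℤ) ≠ (b,-a) := by
      intro h; rw [Prod.mk.injEq] at h; exact hne00 ⟨by omega, by omega⟩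
    have d6 : ((-a,-b) : ℤ×ℤ) ≠ (b,-a) := by
      intro h; rw [Prod.mk.injEq] at h; exact hne00 ⟨by omega, by omega⟩
    rw [Finset.card_insert_of_notMem (by simp [d1, d2, d3]),
      Finset.card_insert_of_notMem (by simp [d4, d5]),
      Finset.card_insert_of_notMem (by simp [d6]),
      Finset.card_singleton]
  -- put it together
  have hcard : hfin.toFinset.card = 4 * T.card := by
    rw [Finset.card_eq_sum_card_fiberwise hmapsto]
    rw [Finset.sum_congr rfl hfiber]
    simp [mul_comm]
  have hT_card : T.card = Nat.card {s : ZMod n // s ^ 2 = -1} := by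
    rw [Nat.card_eq_fintype_card, Fintype.card_subtype]
  rw [← Set.ncard_eq_toFinset_card S hfin] at hcard
  rw [hcard, hT_card]


lemma no_sols (m : ℕ) (hm : 0 < m) (p : ℕ) (hp : p.Prime) (hpm : p ∣ m) (h4 : p % 4 ≠ 1) :
    {x : ℤ × ℤ | x.1 ^ 2 + x.2 ^ 2 = (m : ℤ) ^ 2 ∧ Int.gcd x.1 x.2 = 1} = ∅ := by
  ext ⟨a, b⟩
  simp only [Set.mem_setOf_eq, Set.mem_empty_iff_false, iff_false, not_and]
  intro heq hgcd
  rcases eq_or_ne p 2 with rfl | hp2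
  · -- p = 2 : parity contradiction
    obtain ⟨k, hk⟩ := hpm
    have hmz : (m:ℤ) = 2 * (k:ℤ) := by exact_mod_cast congrArg (Nat.cast (R := ℤ)) hk
    rw [hmz] at heq
    rcases Int.even_or_odd a with ⟨x, hx⟩ | ⟨x, hx⟩ <;>
      rcases Int.even_or_odd b with ⟨y, hy⟩ | ⟨y, hy⟩
    · -- both even
      have h2 : (2:ℤ) ∣ (Int.gcd a b : ℤ) :=
        Int.dvd_coe_gcd (a := a) (b := b) (c := 2) ⟨x, by omega⟩ ⟨y, by omega⟩
      rw [hgcd] at h2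
      norm_num at h2
    · have ⟨t, ht⟩ : ∃ t : ℤ, (1:ℤ) = 4 * t :=
        ⟨(k:ℤ)^2 - x^2 - y^2 - y, by subst hx hy; linear_combination heq⟩
      omega
    · have ⟨t, ht⟩ : ∃ t : ℤ, (1:ℤ) = 4 * t :=
        ⟨(k:ℤ)^2 - x^2 - x - y^2, by subst hx hy; linear_combination heq⟩
      omega
    · have ⟨t, ht⟩ : ∃ t : ℤ, (2:ℤ) = 4 * t :=
        ⟨(k:ℤ)^2 - x^2 - x - y^2 - y, by subst hx hy; linear_combination heq⟩
      omega
  · -- p odd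
    haveI : Fact p.Prime := ⟨hp⟩
    have hodd : p % 2 = 1 := hp.eq_two_or_odd.resolve_left hp2
    have hp43 : p % 4 = 3 := by omega
    have hmz : ((m:ℤ) : ZMod p) = 0 := by
      rw [show ((m:ℤ) : ZMod p) = ((m:ℕ) : ZMod p) by push_cast; rfl,
        ZMod.natCast_eq_zero_iff]
      exact hpm
    have hzq : ((a : ZMod p))^2 + ((b : ZMod p))^2 = 0 := by
      have := congrArg (fun z : ℤ => (z : ZMod p)) heq
      push_cast at this
      rw [this]
      have : ((m:ℕ) : ZMod p) = 0 := by rw [ZMod.natCast_eq_zero_iff]; exact hpm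
      rw [this]
      ring
    have hb0 : (b : ZMod p) = 0 := by
      by_contra hb
      have hsq : IsSquare (-1 : ZMod p) := by
        refine ⟨(a : ZMod p) * ((b : ZMod p))⁻¹, ?_⟩
        have hbu : ((b : ZMod p)) * ((b : ZMod p))⁻¹ = 1 := mul_inv_cancel₀ hb
        have : ((a : ZMod p))^2 = -((b : ZMod p))^2 := by linear_combination hzq
        field_simp
        linear_combination -this
      rw [ZMod.exists_sq_eq_neg_one_iff] at hsq
      exact hsq hp43
    have ha0 : (a : ZMod p) = 0 := by
      have : ((a : ZMod p))^2 = 0 := by rw [hb0] at hzq; simpa using hzq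
      exact pow_eq_zero_iff (n := 2) (by norm_num) |>.mp this
    have hpa : (p:ℤ) ∣ a := by rwa [← ZMod.intCast_zmod_eq_zero_iff_dvd]
    have hpb : (p:ℤ) ∣ b := by rwa [← ZMod.intCast_zmod_eq_zero_iff_dvd]
    have : (p:ℤ) ∣ (Int.gcd a b : ℤ) := Int.dvd_coe_gcd hpa hpb
    rw [hgcd] at this
    have : p ∣ 1 := by exact_mod_cast this
    exact hp.one_lt.ne' (Nat.dvd_one.mp this)

/-- The number of primitive integral solutions of `a² + b² = m²`, i.e. pairs
`(a, b) ∈ ℤ × ℤ` with `a² + b² = m²` and `gcd(a,b) = 1`, equals `4·d*(m)` if every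
prime factor of `m` is congruent to `1` mod `4`, and equals `0` otherwise. -/
theorem count_primitive_pythagorean (m : ℕ) (hm : 0 < m) :
    {x : ℤ × ℤ | x.1 ^ 2 + x.2 ^ 2 = (m : ℤ) ^ 2 ∧ Int.gcd x.1 x.2 = 1}.Finite ∧
      {x : ℤ × ℤ | x.1 ^ 2 + x.2 ^ 2 = (m : ℤ) ^ 2 ∧ Int.gcd x.1 x.2 = 1}.ncard =
        if ∀ p : ℕ, p.Prime → p ∣ m → p % 4 = 1 then 4 * numSquarefreeDivisors m
        else 0 := by
  by_cases hcond : ∀ p : ℕ, p.Prime → p ∣ m → p % 4 = 1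
  · rw [if_pos hcond]
    have hm2 : m ^ 2 ≠ 0 := pow_ne_zero 2 hm.ne'
    have hmodd : Odd (m ^ 2) := by
      have h2m : ¬ (2 ∣ m) := by
        intro h2
        have := hcond 2 Nat.prime_two h2
        omega
      rw [Nat.odd_iff] at *
      have hmo : m % 2 = 1 := by omega
      rw [Nat.pow_mod, hmo]
    have hcast : {x : ℤ × ℤ | x.1 ^ 2 + x.2 ^ 2 = (m : ℤ) ^ 2 ∧ Int.gcd x.1 x.2 = 1}
        = {x : ℤ × ℤ | x.1 ^ 2 + x.2 ^ 2 = ((m ^ 2 : ℕ) : ℤ) ∧ Int.gcd x.1 x.2 = 1} := by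
      have : ((m ^ 2 : ℕ) : ℤ) = (m : ℤ) ^ 2 := by push_cast; ring
      rw [this]
    obtain ⟨hfin, hcount⟩ := main_count (m ^ 2) hm2 hmodd
    rw [hcast]
    refine ⟨hfin, ?_⟩
    rw [hcount, card_sqrt_sq m hm.ne' hcond, sqfree_div_card m hm.ne']
  · rw [if_neg hcond]
    push_neg at hcond
    obtain ⟨p, hp, hpm, h4⟩ := hcond
    rw [no_sols m hm p hp hpm h4]
    exact ⟨Set.finite_empty, Set.ncard_empty _⟩
end

section
/- The multiplicative group {z ∈ ℚ(i)ˣ : z·z̄ = 1} of unit-modulus Gaussian rationals is isomorphic to the direct product of a cyclic group of order 4 and a free abelian group of countably infinite rank, i.e. to ℤ/4ℤ × ⨁_{k∈ℕ} ℤ. -/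
open GaussianInt Complex

namespace UCGR


/-- primes ≡ 1 mod 4 -/
def P (q : ℕ) : Prop := q.Prime ∧ q % 4 = 1

lemma P_infinite : (setOf P).Infinite := by
  have := Nat.infinite_setOf_prime_modEq_one (k := 4) (by norm_num)
  have he : setOf P = {q : ℕ | q.Prime ∧ q ≡ 1 [MOD 4]} := by
    ext q; simp [P, Nat.ModEq]; exact Iff.rfl
  rw [he]; exact this

noncomputable def pp (n : ℕ) : ℕ := Nat.nth P n

lemma pp_P (n : ℕ) : P (pp n) := Nat.nth_mem_of_infinite P_infinite n
lemma pp_prime (n : ℕ) : (pp n).Prime := (pp_P n).1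
lemma pp_mod (n : ℕ) : pp n % 4 = 1 := (pp_P n).2
lemma pp_injective : Function.Injective pp := Nat.nth_injective P_infinite

lemma exists_ab (n : ℕ) : ∃ ab : ℕ × ℕ, ab.1 ^ 2 + ab.2 ^ 2 = pp n := by
  have : Fact (pp n).Prime := ⟨pp_prime n⟩
  obtain ⟨a, b, h⟩ := Nat.Prime.sq_add_sq (p := pp n) (by rw [pp_mod]; norm_num)
  exact ⟨(a, b), h⟩

noncomputable def ab (n : ℕ) : ℕ × ℕ := Classical.choose (exists_ab n)

lemma ab_spec (n : ℕ) : (ab n).1 ^ 2 + (ab n).2 ^ 2 = pp n := Classical.choose_spec (exists_ab n)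

noncomputable def gp (n : ℕ) : GaussianInt := ⟨(ab n).1, (ab n).2⟩

lemma norm_gp (n : ℕ) : (gp n).norm = pp n := by
  have := ab_spec n
  rw [Zsqrtd.norm_def, gp]
  push_cast [← this]
  ring

lemma mul_star_gp (n : ℕ) : gp n * star (gp n) = (pp n : GaussianInt) := by
  rw [← Zsqrtd.norm_eq_mul_conj, norm_gp]
  norm_cast




def iG : GaussianInt := ⟨0, 1⟩

lemma isUnit_cases {x : GaussianInt} (h : IsUnit x) :
    x = 1 ∨ x = -1 ∨ x = iG ∨ x = -iG := by
  have h1 : x.norm.natAbs = 1 := Zsqrtd.norm_eq_one_iff.2 h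
  have h2 : x.norm = x.re * x.re + x.im * x.im := by
    rw [Zsqrtd.norm_def]; ring
  have h3 : x.re * x.re + x.im * x.im = 1 := by
    have h4 : (0:ℤ) ≤ x.norm := by nlinarith [h2]
    omega
  have hre : -1 ≤ x.re ∧ x.re ≤ 1 := by constructor <;> nlinarith
  have him : -1 ≤ x.im ∧ x.im ≤ 1 := by constructor <;> nlinarith
  have e1 : (1:GaussianInt) = ⟨1,0⟩ := rfl
  have e2 : (-1:GaussianInt) = ⟨-1,0⟩ := rfl
  have e3 : (-iG:GaussianInt) = ⟨0,-1⟩ := rfl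
  obtain ⟨r, i⟩ := x
  simp only [e1, e2, iG, e3, Zsqrtd.ext_iff] at *
  obtain ⟨hr1, hr2⟩ := hre; obtain ⟨hi1, hi2⟩ := him
  interval_cases r <;> interval_cases i <;> omega

lemma prime_of_norm_natAbs_prime {x : GaussianInt} (h : x.norm.natAbs.Prime) : Prime x := by
  rw [← UniqueFactorizationMonoid.irreducible_iff_prime]
  constructor
  · rw [← Zsqrtd.norm_eq_one_iff]
    exact fun h1 => h.ne_one (by omega)
  · intro a b hab
    by_contra hc
    push_neg at hc
    obtain ⟨ha, hb⟩ := hc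
    have ha' : a.norm.natAbs ≠ 1 := fun h' => ha (Zsqrtd.norm_eq_one_iff.1 h')
    have hb' : b.norm.natAbs ≠ 1 := fun h' => hb (Zsqrtd.norm_eq_one_iff.1 h')
    have : x.norm.natAbs = a.norm.natAbs * b.norm.natAbs := by
      rw [hab, Zsqrtd.norm_mul, Int.natAbs_mul]
    rcases h.eq_one_or_self_of_dvd a.norm.natAbs ⟨_, this⟩ with h' | h'
    · exact ha' h'
    · have hbpos : b.norm.natAbs ≠ 0 := by
        intro h0
        rw [h0, mul_zero] at this
        exact h.ne_zero this
      have hx := h.pos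
      rw [h'] at this
      have : (Zsqrtd.norm b).natAbs = 1 := by
        rcases Nat.eq_zero_or_pos (Zsqrtd.norm b).natAbs with h0 | h0
        · exact absurd h0 hbpos
        · nlinarith
      exact hb' this

lemma prime_star {x : GaussianInt} (h : Prime x) : Prime (star x) := by
  exact (MulEquiv.prime_iff (starRingAut (R := GaussianInt)).toMulEquiv).2 h




lemma gp_prime (n : ℕ) : Prime (gp n) :=
  prime_of_norm_natAbs_prime (by rw [norm_gp]; simp [pp_prime n])

lemma norm_natAbs_gp (n : ℕ) : (gp n).norm.natAbs = pp n := by rw [norm_gp]; simp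

lemma assoc_norm {x y : GaussianInt} (h : Associated x y) : x.norm = y.norm := by
  obtain ⟨u, hu⟩ := h
  have : Zsqrtd.norm (u : GaussianInt) = 1 := (Zsqrtd.norm_eq_one_iff' (by norm_num) _).2 u.isUnit
  rw [← hu, Zsqrtd.norm_mul, this, mul_one]

lemma sq_ne_pp {a : ℤ} (n : ℕ) : a ^ 2 ≠ (pp n : ℤ) := by
  intro h
  have h2 : a.natAbs ^ 2 = pp n := by
    have := congrArg Int.natAbs h
    rwa [Int.natAbs_pow, Int.natAbs_natCast] at this
  have hdvd : a.natAbs ∣ pp n := ⟨a.natAbs, by rw [← h2]; ring⟩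
  have hp := pp_prime n
  rcases hp.eq_one_or_self_of_dvd _ hdvd with h' | h'
  · rw [h'] at h2; simp at h2; exact hp.ne_one h2.symm
  · rw [h'] at h2
    nlinarith [hp.two_le]

lemma not_assoc_star_gp (n : ℕ) : ¬ Associated (gp n) (star (gp n)) := by
  intro h
  obtain ⟨u, hu⟩ := h
  have hsum : (gp n).re ^ 2 + (gp n).im ^ 2 = (pp n : ℤ) := by
    have := norm_gp n
    rw [Zsqrtd.norm_def] at this
    nlinarith [this]
  set a := (gp n).re with ha
  set b := (gp n).im with hb
  have hodd : ¬ (2 ∣ pp n) := by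
    have := pp_mod n; omega
  rcases isUnit_cases u.isUnit with h' | h' | h' | h' <;> rw [h'] at hu
  · rw [mul_one] at hu
    have : b = -b := by
      have := congrArg Zsqrtd.im hu
      simpa using this
    have hb0 : b = 0 := by omega
    exact sq_ne_pp n (by rw [← hsum, hb0]; ring)
  · have h1 : -a = a := by have := congrArg Zsqrtd.re hu; simpa using this
    have ha0 : a = 0 := by omega
    exact sq_ne_pp n (by rw [← hsum, ha0]; ring)
  · have h1 : (gp n * iG).re = -b := by rw [hb]; simp [iG, Zsqrtd.re_mul]
    have h2 : (gp n * iG).re = a := by rw [hu, ha]; simp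
    have hab : a = -b := by omega
    have : (2:ℤ) * b ^ 2 = (pp n : ℤ) := by rw [← hsum, hab]; ring
    have : (2:ℕ) ∣ pp n := by
      have h2 : (2:ℤ) ∣ (pp n : ℤ) := ⟨b ^ 2, this.symm⟩
      exact_mod_cast Int.ofNat_dvd.1 (by exact_mod_cast h2)
    exact hodd this
  · have h1 : (gp n * -iG).re = b := by rw [hb]; simp [iG, Zsqrtd.re_mul]
    have h2 : (gp n * -iG).re = a := by rw [hu, ha]; simp
    have hab : a = b := by omega
    have : (2:ℤ) * b ^ 2 = (pp n : ℤ) := by rw [← hsum, hab]; ring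
    have : (2:ℕ) ∣ pp n := by
      have h2 : (2:ℤ) ∣ (pp n : ℤ) := ⟨b ^ 2, this.symm⟩
      exact_mod_cast Int.ofNat_dvd.1 (by exact_mod_cast h2)
    exact hodd this

lemma not_assoc_gp_of_ne {m n : ℕ} (h : m ≠ n) : ¬ Associated (gp m) (gp n) := by
  intro ha
  have := assoc_norm ha
  rw [norm_gp, norm_gp] at this
  exact h (pp_injective (by exact_mod_cast this))

lemma not_assoc_gp_star_of_ne {m n : ℕ} (h : m ≠ n) : ¬ Associated (gp m) (star (gp n)) := by
  intro ha
  have := assoc_norm ha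
  rw [norm_gp, Zsqrtd.norm_conj, norm_gp] at this
  exact h (pp_injective (by exact_mod_cast this))

lemma star_assoc {x y : GaussianInt} (h : Associated x y) : Associated (star x) (star y) := by
  obtain ⟨u, hu⟩ := h
  exact ⟨(Units.map (starRingAut (R := GaussianInt)).toRingHom.toMonoidHom) u, by
    simp [← hu, star_mul, mul_comm]⟩

lemma exists_assoc {π : GaussianInt} (hπ : Prime π) (hns : ¬ Associated π (star π)) :
    ∃ n, Associated π (gp n) ∨ Associated π (star (gp n)) := by
  set N := π.norm.natAbs with hN
  have hN0 : N ≠ 0 := by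
    rw [hN, Ne, Int.natAbs_eq_zero, GaussianInt.norm_eq_zero]
    exact hπ.ne_zero
  have hdvdN : π ∣ (N : GaussianInt) := by
    have h1 : ((N : ℤ) : GaussianInt) = (π.norm : GaussianInt) := by
      rw [hN, Int.natAbs_of_nonneg (GaussianInt.norm_nonneg π)]
    have h2 : (π.norm : GaussianInt) = π * star π := Zsqrtd.norm_eq_mul_conj π
    exact ⟨star π, by rw [← h2, ← h1]; norm_cast⟩
  have hfact : ((N : GaussianInt)) = ∏ q ∈ N.primeFactors, (q : GaussianInt) ^ (N.factorization q) := by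
    conv_lhs => rw [← Nat.factorization_prod_pow_eq_self hN0]
    rw [Finsupp.prod, Nat.support_factorization]
    push_cast
    rfl
  rw [hfact] at hdvdN
  obtain ⟨q, hqmem, hqdvd⟩ := hπ.exists_mem_finset_dvd hdvdN
  have hq : q.Prime := Nat.prime_of_mem_primeFactors hqmem
  have hπq : π ∣ (q : GaussianInt) := hπ.dvd_of_dvd_pow hqdvd
  have : Fact q.Prime := ⟨hq⟩
  by_cases h3 : q % 4 = 3
  · exfalso
    have hqp : Prime (q : GaussianInt) :=
      (GaussianInt.prime_iff_mod_four_eq_three_of_nat_prime q).2 h3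
    have ha : Associated π (q : GaussianInt) := hπ.associated_of_dvd hqp hπq
    have ha2 : Associated (star π) (q : GaussianInt) := by
      have := star_assoc ha
      rwa [star_natCast] at this
    exact hns (ha.trans ha2.symm)
  by_cases h2 : q = 2
  · exfalso
    set t : GaussianInt := ⟨1, 1⟩ with ht
    have htnorm : t.norm = 2 := by rw [Zsqrtd.norm_def]; simp [ht]
    have htp : Prime t := prime_of_norm_natAbs_prime (by rw [htnorm]; norm_num)
    have h2t : (q : GaussianInt) = t * star t := by
      rw [← Zsqrtd.norm_eq_mul_conj, htnorm, h2]; norm_cast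
    rw [h2t] at hπq
    have hiu : IsUnit iG := by
      rw [← Zsqrtd.norm_eq_one_iff]
      rfl
    have hts : Associated (star t) t := by
      refine ⟨hiu.unit, ?_⟩
      show star t * iG = t
      ext <;> simp [ht, iG, Zsqrtd.re_mul, Zsqrtd.im_mul]
    have ha : Associated π t := by
      rcases (hπ.2.2 _ _ hπq) with hd | hd
      · exact hπ.associated_of_dvd htp hd
      · exact (hπ.associated_of_dvd (prime_star htp) hd).trans hts
    exact hns (ha.trans ((star_assoc ha).trans hts).symm)
  · have h1 : q % 4 = 1 := by
      have hodd := hq.odd_of_ne_two h2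
      rcases hodd with ⟨c, hc⟩
      omega
    classical
    set n := Nat.count P q with hn
    have hpn : pp n = q := Nat.nth_count (⟨hq, h1⟩ : P q)
    have hdvd2 : π ∣ gp n * star (gp n) := by
      rw [mul_star_gp, hpn]; exact hπq
    rcases hπ.2.2 _ _ hdvd2 with hd | hd
    · exact ⟨n, Or.inl (hπ.associated_of_dvd (gp_prime n) hd)⟩
    · exact ⟨n, Or.inr (hπ.associated_of_dvd (prime_star (gp_prime n)) hd)⟩


end UCGR

/-- The Gaussian rational field `ℚ(i)`, the subfield of `ℂ` generated by `i`. -/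
noncomputable def gaussianRationals : Subfield ℂ :=
  Subfield.closure {Complex.I}

/-- The multiplicative group of unit-modulus Gaussian rationals:
`{z ∈ ℚ(i)ˣ : z·z̄ = 1}`, as a subgroup of `ℂˣ`. -/
noncomputable def unitCircleGaussianRationals : Subgroup ℂˣ where
  carrier := {z : ℂˣ | (z : ℂ) ∈ gaussianRationals ∧ (z : ℂ) * (starRingEnd ℂ) z = 1}
  one_mem' := ⟨one_mem _, by simp⟩
  mul_mem' := by
    rintro a b ⟨ha1, ha2⟩ ⟨hb1, hb2⟩
    refine ⟨by push_cast; exact mul_mem ha1 hb1, ?_⟩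
    push_cast
    rw [map_mul]
    calc (a : ℂ) * b * ((starRingEnd ℂ) a * (starRingEnd ℂ) b)
        = ((a : ℂ) * (starRingEnd ℂ) a) * ((b : ℂ) * (starRingEnd ℂ) b) := by ring
      _ = 1 := by rw [ha2, hb2, one_mul]
  inv_mem' := by
    rintro a ⟨ha1, ha2⟩
    constructor
    · rw [Units.val_inv_eq_inv_val]
      exact inv_mem ha1
    · rw [Units.val_inv_eq_inv_val, map_inv₀, ← mul_inv, ha2, inv_one]


namespace UCGR
/-- The subfield of quotients of Gaussian integers. -/
noncomputable def GQ : Subfield ℂ where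
  carrier := {z : ℂ | ∃ u v : GaussianInt, v ≠ 0 ∧ z = toComplex u / toComplex v}
  zero_mem' := ⟨0, 1, one_ne_zero, by simp⟩
  one_mem' := ⟨1, 1, one_ne_zero, by simp⟩
  add_mem' := by
    rintro x y ⟨u1, v1, hv1, rfl⟩ ⟨u2, v2, hv2, rfl⟩
    refine ⟨u1 * v2 + u2 * v1, v1 * v2, mul_ne_zero hv1 hv2, ?_⟩
    have h1 : toComplex v1 ≠ 0 := by rwa [Ne, toComplex_eq_zero]
    have h2 : toComplex v2 ≠ 0 := by rwa [Ne, toComplex_eq_zero]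
    push_cast [toComplex_add, toComplex_mul]
    field_simp
  mul_mem' := by
    rintro x y ⟨u1, v1, hv1, rfl⟩ ⟨u2, v2, hv2, rfl⟩
    refine ⟨u1 * u2, v1 * v2, mul_ne_zero hv1 hv2, ?_⟩
    push_cast [toComplex_mul]
    ring
  neg_mem' := by
    rintro x ⟨u, v, hv, rfl⟩
    exact ⟨-u, v, hv, by push_cast [toComplex_neg]; ring⟩
  inv_mem' := by
    rintro x ⟨u, v, hv, rfl⟩
    by_cases hu : u = 0
    · exact ⟨0, 1, one_ne_zero, by simp [hu]⟩
    · refine ⟨v, u, hu, ?_⟩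
      rw [inv_div]

lemma mem_gaussianRationals_iff {z : ℂ} :
    z ∈ gaussianRationals ↔ ∃ u v : GaussianInt, v ≠ 0 ∧ z = toComplex u / toComplex v := by
  constructor
  · intro hz
    have : gaussianRationals ≤ GQ := by
      rw [gaussianRationals, Subfield.closure_le]
      intro w hw
      rw [Set.mem_singleton_iff] at hw
      subst hw
      exact ⟨⟨0, 1⟩, 1, one_ne_zero, by simp [toComplex_def]⟩
    exact this hz
  · rintro ⟨u, v, hv, rfl⟩
    have hI : Complex.I ∈ gaussianRationals := Subfield.subset_closure rfl
    have key : ∀ w : GaussianInt, (toComplex w) ∈ gaussianRationals := fun w => by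
      rw [toComplex_def]
      exact add_mem (intCast_mem _ _) (mul_mem (intCast_mem _ _) hI)
    have hu := key u
    have hv2 := key v
    exact div_mem hu hv2




lemma mem_gR_toComplex (w : GaussianInt) : (toComplex w) ∈ gaussianRationals :=
  mem_gaussianRationals_iff.2 ⟨w, 1, one_ne_zero, by simp⟩

lemma tc_ne_zero {w : GaussianInt} (h : w ≠ 0) : toComplex w ≠ 0 := by
  rwa [Ne, toComplex_eq_zero]

lemma conj_tc (w : GaussianInt) : (starRingEnd ℂ) (toComplex w) = toComplex (star w) :=
  (toComplex_star w).symm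

local notation "U" => unitCircleGaussianRationals

lemma gp_ne_zero (n : ℕ) : gp n ≠ 0 := (gp_prime n).ne_zero
lemma star_gp_ne_zero (n : ℕ) : star (gp n) ≠ 0 := (prime_star (gp_prime n)).ne_zero

/-- Build an element of U from a ratio u/v with matching conjugate products. -/
noncomputable def mkU (u v : GaussianInt) (hu : u ≠ 0) (hv : v ≠ 0)
    (h : u * star u = v * star v) : U := by
  refine ⟨Units.mk0 (toComplex u / toComplex v)
    (div_ne_zero (tc_ne_zero hu) (tc_ne_zero hv)), ?_, ?_⟩
  · exact mem_gaussianRationals_iff.2 ⟨u, v, hv, rfl⟩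
  · show (toComplex u / toComplex v) * (starRingEnd ℂ) (toComplex u / toComplex v) = 1
    rw [map_div₀, conj_tc, conj_tc]
    rw [div_mul_div_comm, ← toComplex_mul, ← toComplex_mul, h]
    exact div_self (tc_ne_zero (mul_ne_zero hv (star_ne_zero.2 hv)))

lemma val_mkU (u v : GaussianInt) (hu hv hh) :
    ((mkU u v hu hv hh : ℂˣ) : ℂ) = toComplex u / toComplex v := rfl

noncomputable def IU : U :=
  mkU iG 1 (by decide) one_ne_zero (by decide)

lemma val_IU : ((IU : ℂˣ) : ℂ) = I := by
  rw [IU, val_mkU]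
  simp [iG, toComplex_def]

noncomputable def WU (n : ℕ) : U :=
  mkU (gp n) (star (gp n)) (gp_ne_zero n) (star_gp_ne_zero n)
    (by rw [star_star, mul_comm])

lemma val_WU (n : ℕ) :
    ((WU n : ℂˣ) : ℂ) = toComplex (gp n) / toComplex (star (gp n)) := rfl

lemma IU_pow_four : IU ^ 4 = 1 := by
  apply Subtype.ext
  apply Units.ext
  show (((IU ^ 4 : U) : ℂˣ) : ℂ) = 1
  rw [SubgroupClass.coe_pow, Units.val_pow_eq_pow_val, val_IU]
  rw [show (4:ℕ) = 2 * 2 from rfl, pow_mul, Complex.I_sq]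
  norm_num

noncomputable def F1 : ZMod (4:ℕ) →+ Additive ↥U :=
  ZMod.lift 4 ⟨zmultiplesHom (Additive ↥U) (Additive.ofMul IU), by
    show ((4:ℕ):ℤ) • Additive.ofMul IU = 0
    rw [← ofMul_zpow, zpow_natCast, IU_pow_four, ofMul_one]⟩

lemma toMul_F1 (k : ZMod 4) : Additive.toMul (F1 k) = IU ^ k.val := by
  have hk : ((k.val : ℤ) : ZMod 4) = k := by
    push_cast
    exact ZMod.natCast_rightInverse k
  conv_lhs => rw [← hk]
  rw [F1, ZMod.lift_coe]
  rw [zmultiplesHom_apply, ← ofMul_zpow, toMul_ofMul, zpow_natCast]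

noncomputable def F2 : (ℕ →₀ ℤ) →+ Additive ↥U :=
  Finsupp.liftAddHom (fun n => zmultiplesHom (Additive ↥U) (Additive.ofMul (WU n)))

lemma toMul_F2 (f : ℕ →₀ ℤ) :
    Additive.toMul (F2 f) = ∏ n ∈ f.support, WU n ^ (f n) := by
  rw [F2, Finsupp.liftAddHom_apply, Finsupp.sum, toMul_sum]
  refine Finset.prod_congr rfl fun n _ => ?_
  rw [zmultiplesHom_apply, ← ofMul_zpow, toMul_ofMul]

noncomputable def Phi : Multiplicative (ZMod 4 × (ℕ →₀ ℤ)) →* U :=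
  AddMonoidHom.toMultiplicativeLeft (F1.coprod F2)

lemma val_U_prod {s : Finset ℕ} {g : ℕ → ↥U} :
    (((∏ n ∈ s, g n : ↥U) : ℂˣ) : ℂ) = ∏ n ∈ s, ((g n : ℂˣ) : ℂ) := by
  rw [SubmonoidClass.coe_finset_prod]
  exact map_prod (Units.coeHom ℂ) _ s

lemma val_Phi (k : ZMod 4) (f : ℕ →₀ ℤ) :
    ((Phi (Multiplicative.ofAdd (k, f)) : ℂˣ) : ℂ)
      = I ^ k.val * ∏ n ∈ f.support, (toComplex (gp n) / toComplex (star (gp n))) ^ (f n) := by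
  have h1 : Phi (Multiplicative.ofAdd (k, f))
      = Additive.toMul (F1 k) * Additive.toMul (F2 f) := rfl
  rw [h1, toMul_F1, toMul_F2]
  rw [Subgroup.coe_mul, Units.val_mul]
  congr 1
  · rw [SubgroupClass.coe_pow, Units.val_pow_eq_pow_val, val_IU]
  · rw [val_U_prod]
    refine Finset.prod_congr rfl fun n _ => ?_
    rw [SubgroupClass.coe_zpow, Units.val_zpow_eq_zpow_val, val_WU]

end UCGR

namespace UCGR
open Classical in
lemma isUnit_iG : IsUnit iG := by
  rw [← Zsqrtd.norm_eq_one_iff]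
  rfl

lemma tc_iG : toComplex iG = I := by simp [iG, toComplex_def]

noncomputable def AA (f : ℕ →₀ ℤ) : GaussianInt :=
  ∏ n ∈ f.support, (if 0 ≤ f n then gp n else star (gp n)) ^ (f n).natAbs

noncomputable def AA' (f : ℕ →₀ ℤ) : GaussianInt :=
  ∏ n ∈ f.support, (if 0 ≤ f n then star (gp n) else gp n) ^ (f n).natAbs

lemma star_AA (f : ℕ →₀ ℤ) : star (AA f) = AA' f := by
  rw [AA, AA', star_prod]
  refine Finset.prod_congr rfl fun n _ => ?_
  rw [star_pow, apply_ite star, star_star]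

lemma AA_ne_zero (f : ℕ →₀ ℤ) : AA f ≠ 0 := by
  rw [AA]
  apply Finset.prod_ne_zero_iff.2
  intro n _
  apply pow_ne_zero
  split_ifs
  · exact gp_ne_zero n
  · exact star_gp_ne_zero n

lemma AA'_ne_zero (f : ℕ →₀ ℤ) : AA' f ≠ 0 := by
  rw [← star_AA]
  exact star_ne_zero.2 (AA_ne_zero f)

lemma prod_w_eq (f : ℕ →₀ ℤ) :
    ∏ n ∈ f.support, (toComplex (gp n) / toComplex (star (gp n))) ^ (f n)
      = toComplex (AA f) / toComplex (AA' f) := by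
  rw [AA, AA', map_prod, map_prod, ← Finset.prod_div_distrib]
  refine Finset.prod_congr rfl fun n _ => ?_
  by_cases h : 0 ≤ f n
  · rw [if_pos h, if_pos h, map_pow, map_pow, ← div_pow, ← zpow_natCast,
      Int.natAbs_of_nonneg h]
  · push_neg at h
    have h1 : f n = -((f n).natAbs : ℤ) := by
      rw [Int.ofNat_natAbs_of_nonpos h.le, neg_neg]
    rw [if_neg (not_le.2 h), if_neg (not_le.2 h), map_pow, map_pow]
    conv_lhs => rw [h1]
    rw [zpow_neg, zpow_natCast, div_pow, inv_div]

lemma Phi_injective : Function.Injective Phi := by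
  rw [injective_iff_map_eq_one]
  intro x hx
  set k := x.toAdd.1 with hk
  set f := x.toAdd.2 with hf
  have hxx : x = Multiplicative.ofAdd (k, f) := rfl
  have hval : ((Phi x : ℂˣ) : ℂ) = 1 := by rw [hx]; rfl
  rw [hxx, val_Phi, prod_w_eq] at hval
  have hE : iG ^ k.val * AA f = AA' f := by
    rw [← toComplex_inj, toComplex_mul, map_pow, tc_iG]
    rw [← mul_div_assoc, div_eq_one_iff_eq (tc_ne_zero (AA'_ne_zero f))] at hval
    exact hval
  have hAssoc : Associated (AA f) (AA' f) := by
    refine ⟨isUnit_iG.unit ^ k.val, ?_⟩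
    rw [← hE]
    push_cast
    rw [IsUnit.unit_spec]
    ring
  have hsupp : f.support = ∅ := by
    by_contra hne
    obtain ⟨n, hn⟩ := Finset.nonempty_iff_ne_empty.2 hne
    have hfn : f n ≠ 0 := Finsupp.mem_support_iff.1 hn
    have hna : (f n).natAbs ≠ 0 := Int.natAbs_ne_zero.2 hfn
    by_cases hc : 0 ≤ f n
    · have h1 : gp n ∣ AA f := by
        rw [AA]
        refine dvd_trans ?_ (Finset.dvd_prod_of_mem _ hn)
        rw [if_pos hc]
        exact dvd_pow_self _ hna
      have h2 : gp n ∣ AA' f := h1.trans hAssoc.dvd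
      rw [AA'] at h2
      obtain ⟨m, hm, hdvd⟩ := (gp_prime n).exists_mem_finset_dvd h2
      have hbase := (gp_prime n).dvd_of_dvd_pow hdvd
      by_cases hcm : 0 ≤ f m
      · rw [if_pos hcm] at hbase
        have ha := (gp_prime n).associated_of_dvd (prime_star (gp_prime m)) hbase
        by_cases hnm : n = m
        · subst hnm; exact not_assoc_star_gp n ha
        · exact not_assoc_gp_star_of_ne hnm ha
      · rw [if_neg hcm] at hbase
        have ha := (gp_prime n).associated_of_dvd (gp_prime m) hbase
        by_cases hnm : n = m
        · subst hnm; exact hcm hc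
        · exact not_assoc_gp_of_ne hnm ha
    · have h1 : star (gp n) ∣ AA f := by
        rw [AA]
        refine dvd_trans ?_ (Finset.dvd_prod_of_mem _ hn)
        rw [if_neg hc]
        exact dvd_pow_self _ hna
      have h2 : gp n ∣ AA' f := by
        obtain ⟨c, hcc⟩ := h1
        rw [← star_AA]
        exact ⟨star c, by rw [hcc, star_mul', star_star]⟩
      have h3 : gp n ∣ AA f := h2.trans hAssoc.symm.dvd
      rw [AA] at h3
      obtain ⟨m, hm, hdvd⟩ := (gp_prime n).exists_mem_finset_dvd h3
      have hbase := (gp_prime n).dvd_of_dvd_pow hdvd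
      by_cases hcm : 0 ≤ f m
      · rw [if_pos hcm] at hbase
        have ha := (gp_prime n).associated_of_dvd (gp_prime m) hbase
        by_cases hnm : n = m
        · subst hnm; exact hc hcm
        · exact not_assoc_gp_of_ne hnm ha
      · rw [if_neg hcm] at hbase
        have ha := (gp_prime n).associated_of_dvd (prime_star (gp_prime m)) hbase
        by_cases hnm : n = m
        · subst hnm; exact not_assoc_star_gp n ha
        · exact not_assoc_gp_star_of_ne hnm ha
  have hf0 : f = 0 := Finsupp.support_eq_empty.1 hsupp
  have hA1 : AA f = 1 := by rw [AA, hsupp, Finset.prod_empty]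
  have hA'1 : AA' f = 1 := by rw [AA', hsupp, Finset.prod_empty]
  rw [hA1, hA'1, mul_one] at hE
  have hkv : k.val = 0 := by
    have hlt : k.val < 4 := ZMod.val_lt k
    have : k.val = 0 ∨ k.val = 1 ∨ k.val = 2 ∨ k.val = 3 := by omega
    rcases this with h | h | h | h
    · exact h
    all_goals (rw [h] at hE; exfalso; revert hE; decide)
  have hk0 : k = 0 := (ZMod.val_eq_zero k).1 hkv
  rw [hxx, hk0, hf0]
  rfl

end UCGR

namespace UCGR

lemma val_U_mul (a b : ↥unitCircleGaussianRationals) :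
    (((a * b : ↥unitCircleGaussianRationals) : ℂˣ) : ℂ) = ((a : ℂˣ) : ℂ) * ((b : ℂˣ) : ℂ) := by
  rw [Subgroup.coe_mul, Units.val_mul]

lemma val_Phi_j (j : ZMod 4) :
    ((Phi (Multiplicative.ofAdd (j, (0 : ℕ →₀ ℤ))) : ℂˣ) : ℂ) = I ^ j.val := by
  rw [val_Phi]
  simp

lemma val_Phi_single (n : ℕ) (e : ℤ) (he : e ≠ 0) :
    ((Phi (Multiplicative.ofAdd ((0 : ZMod 4), Finsupp.single n e)) : ℂˣ) : ℂ)
      = (toComplex (gp n) / toComplex (star (gp n))) ^ e := by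
  rw [val_Phi, Finsupp.support_single_ne_zero n he, Finset.prod_singleton,
    Finsupp.single_eq_same]
  have : ((0 : ZMod 4)).val = 0 := rfl
  rw [this, pow_zero, one_mul]

lemma exists_phi_unit {μ : GaussianInt} (h : IsUnit μ) :
    ∃ x, ((Phi x : ℂˣ) : ℂ) = toComplex μ := by
  rcases isUnit_cases h with h' | h' | h' | h' <;> subst h'
  · exact ⟨Multiplicative.ofAdd ((0 : ZMod 4), 0), by rw [val_Phi_j]; simp⟩
  · refine ⟨Multiplicative.ofAdd ((2 : ZMod 4), 0), by
      rw [val_Phi_j]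
      have : ((2 : ZMod 4)).val = 2 := rfl
      rw [this]
      simp [Complex.I_sq]⟩
  · exact ⟨Multiplicative.ofAdd ((1 : ZMod 4), 0), by
      rw [val_Phi_j]
      have : ((1 : ZMod 4)).val = 1 := rfl
      rw [this, pow_one, tc_iG]⟩
  · refine ⟨Multiplicative.ofAdd ((3 : ZMod 4), 0), by
      rw [val_Phi_j]
      have : ((3 : ZMod 4)).val = 3 := rfl
      rw [this]
      have h4 : (I:ℂ) ^ 3 = -I := by
        rw [pow_succ, Complex.I_sq]
        ring
      rw [h4]
      simp [iG, toComplex_def]⟩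

lemma tc_star_unit {μ : GaussianInt} (h : IsUnit μ) :
    toComplex (star μ) = (toComplex μ)⁻¹ := by
  have h1 : μ * star μ = 1 := by
    have := Zsqrtd.norm_eq_mul_conj μ
    rw [(Zsqrtd.norm_eq_one_iff' (by norm_num) μ).2 h] at this
    simpa using this.symm
  have h2 : toComplex μ * toComplex (star μ) = 1 := by
    rw [← toComplex_mul, h1, toComplex_one]
  exact eq_inv_of_mul_eq_one_right (by rw [mul_comm] at h2 ⊢; exact h2)

lemma exists_phi_ratio {π : GaussianInt} (hπ : Prime π)
    (hns : ¬ Associated π (star π)) :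
    ∃ x, ((Phi x : ℂˣ) : ℂ) = toComplex π / toComplex (star π) := by
  obtain ⟨n, hn | hn⟩ := exists_assoc hπ hns
  · obtain ⟨μ, hμ⟩ := hn.symm
    have hμu : IsUnit (μ : GaussianInt) := Units.isUnit μ
    obtain ⟨x₀, hx₀⟩ := exists_phi_unit (hμu.mul hμu)
    refine ⟨x₀ * Multiplicative.ofAdd ((0 : ZMod 4), Finsupp.single n 1), ?_⟩
    rw [map_mul, val_U_mul, hx₀, val_Phi_single n 1 one_ne_zero]
    rw [← hμ, star_mul', zpow_one]
    rw [toComplex_mul, toComplex_mul, toComplex_mul, tc_star_unit hμu]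
    have hπn : toComplex (gp n) ≠ 0 := tc_ne_zero (gp_ne_zero n)
    have hπn' : toComplex (star (gp n)) ≠ 0 := tc_ne_zero (star_gp_ne_zero n)
    have hμn : toComplex (μ : GaussianInt) ≠ 0 := tc_ne_zero hμu.ne_zero
    field_simp
  · obtain ⟨μ, hμ⟩ := hn.symm
    have hμu : IsUnit (μ : GaussianInt) := Units.isUnit μ
    obtain ⟨x₀, hx₀⟩ := exists_phi_unit (hμu.mul hμu)
    refine ⟨x₀ * Multiplicative.ofAdd ((0 : ZMod 4), Finsupp.single n (-1)), ?_⟩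
    rw [map_mul, val_U_mul, hx₀, val_Phi_single n (-1) (by norm_num)]
    rw [← hμ, star_mul', star_star, zpow_neg, zpow_one]
    rw [toComplex_mul, toComplex_mul, toComplex_mul, tc_star_unit hμu]
    have hπn : toComplex (gp n) ≠ 0 := tc_ne_zero (gp_ne_zero n)
    have hπn' : toComplex (star (gp n)) ≠ 0 := tc_ne_zero (star_gp_ne_zero n)
    have hμn : toComplex (μ : GaussianInt) ≠ 0 := tc_ne_zero hμu.ne_zero
    field_simp

end UCGR

namespace UCGR

lemma natAbs_norm_ge_two {π : GaussianInt} (hπ : Prime π) : 2 ≤ π.norm.natAbs := by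
  have h0 : π.norm.natAbs ≠ 0 := by
    rw [Ne, Int.natAbs_eq_zero, GaussianInt.norm_eq_zero]
    exact hπ.ne_zero
  have h1 : π.norm.natAbs ≠ 1 := fun h =>
    hπ.not_unit (Zsqrtd.norm_eq_one_iff.1 h)
  omega

lemma key : ∀ N : ℕ, ∀ u v : GaussianInt, u.norm.natAbs = N → u ≠ 0 → v ≠ 0 →
    u * star u = v * star v →
    ∃ x, ((Phi x : ℂˣ) : ℂ) = toComplex u / toComplex v := by
  intro N
  induction N using Nat.strong_induction_on with
  | _ N ih =>
  intro u v hN hu hv heq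
  by_cases hunit : IsUnit u
  · have hnu : u.norm = 1 := (Zsqrtd.norm_eq_one_iff' (by norm_num) u).2 hunit
    have hnormeq : u.norm = v.norm := by
      have h1 : ((u.norm : ℤ) : GaussianInt) = ((v.norm : ℤ) : GaussianInt) := by
        rw [Zsqrtd.norm_eq_mul_conj, Zsqrtd.norm_eq_mul_conj, heq]
      exact_mod_cast h1
    have hvunit : IsUnit v := (Zsqrtd.norm_eq_one_iff' (by norm_num) v).1
      (by rw [← hnormeq, hnu])
    obtain ⟨x, hx⟩ := exists_phi_unit (hunit.mul (isUnit_star.2 hvunit))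
    refine ⟨x, ?_⟩
    rw [hx, toComplex_mul, tc_star_unit hvunit, div_eq_mul_inv]
  · obtain ⟨π, hirr, hdvd⟩ := WfDvdMonoid.exists_irreducible_factor hunit hu
    have hπ : Prime π := UniqueFactorizationMonoid.irreducible_iff_prime.1 hirr
    obtain ⟨u₁, rfl⟩ := hdvd
    have hu₁ : u₁ ≠ 0 := by
      rintro rfl
      rw [mul_zero] at hu
      exact hu rfl
    have hπ0 : π ≠ 0 := hπ.ne_zero
    have htcπ : toComplex π ≠ 0 := tc_ne_zero hπ0
    have hstarπ : star π ≠ 0 := star_ne_zero.2 hπ0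
    have hππ : π * star π ≠ 0 := mul_ne_zero hπ0 hstarπ
    have hNlt : u₁.norm.natAbs < N := by
      have hmul : N = π.norm.natAbs * u₁.norm.natAbs := by
        rw [← hN, Zsqrtd.norm_mul, Int.natAbs_mul]
      have h2 := natAbs_norm_ge_two hπ
      have h3 : u₁.norm.natAbs ≠ 0 := by
        rw [Ne, Int.natAbs_eq_zero, GaussianInt.norm_eq_zero]
        exact hu₁
      calc u₁.norm.natAbs < π.norm.natAbs * u₁.norm.natAbs := by
            rw [lt_mul_iff_one_lt_left (by omega)]
            omega
        _ = N := hmul.symm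
    by_cases hA : π ∣ v
    · obtain ⟨v₁, rfl⟩ := hA
      have hv₁ : v₁ ≠ 0 := by
        rintro rfl
        rw [mul_zero] at hv
        exact hv rfl
      have heq₁ : u₁ * star u₁ = v₁ * star v₁ := by
        apply mul_left_cancel₀ hππ
        calc π * star π * (u₁ * star u₁) = π * u₁ * star (π * u₁) := by
              rw [star_mul']; ring
          _ = π * v₁ * star (π * v₁) := heq
          _ = π * star π * (v₁ * star v₁) := by rw [star_mul']; ring
      obtain ⟨x, hx⟩ := ih _ hNlt u₁ v₁ rfl hu₁ hv₁ heq₁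
      refine ⟨x, ?_⟩
      rw [hx, toComplex_mul, toComplex_mul, mul_div_mul_left _ _ htcπ]
    · have hdvd2 : π ∣ v * star v := by
        rw [← heq]
        exact ⟨u₁ * star (π * u₁), by ring⟩
      have hdvd3 : π ∣ star v := (hπ.2.2 _ _ hdvd2).resolve_left hA
      obtain ⟨c, hc⟩ := hdvd3
      have hvc : v = star π * star c := by
        rw [← star_star v, hc, star_mul']
      set v₁ := star c with hv₁def
      have hv₁ : v₁ ≠ 0 := by
        rintro h0
        rw [hvc, h0, mul_zero] at hv
        exact hv rfl
      have hns : ¬ Associated π (star π) := by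
        intro ha
        exact hA (by
          have : π ∣ star π := ha.dvd
          exact this.trans ⟨v₁, hvc⟩)
      have heq₁ : u₁ * star u₁ = v₁ * star v₁ := by
        apply mul_left_cancel₀ hππ
        calc π * star π * (u₁ * star u₁) = π * u₁ * star (π * u₁) := by
              rw [star_mul']; ring
          _ = (star π * v₁) * star (star π * v₁) := by rw [← hvc]; exact heq
          _ = π * star π * (v₁ * star v₁) := by rw [star_mul', star_star]; ring
      obtain ⟨x₁, hx₁⟩ := ih _ hNlt u₁ v₁ rfl hu₁ hv₁ heq₁
      obtain ⟨x₀, hx₀⟩ := exists_phi_ratio hπ hns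
      refine ⟨x₀ * x₁, ?_⟩
      rw [map_mul, val_U_mul, hx₀, hx₁, hvc, toComplex_mul, toComplex_mul]
      have h1 : toComplex (star π) ≠ 0 := tc_ne_zero hstarπ
      have h2 : toComplex v₁ ≠ 0 := tc_ne_zero hv₁
      field_simp

lemma Phi_surjective : Function.Surjective Phi := by
  intro z
  obtain ⟨hz1, hz2⟩ := z.2
  obtain ⟨u, v, hv, hzuv⟩ := mem_gaussianRationals_iff.1 hz1
  have hzne : ((z : ℂˣ) : ℂ) ≠ 0 := Units.ne_zero _
  have hu : u ≠ 0 := by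
    rintro rfl
    rw [hzuv] at hzne
    simp at hzne
  have htcu : toComplex u ≠ 0 := tc_ne_zero hu
  have htcv : toComplex v ≠ 0 := tc_ne_zero hv
  have heq : u * star u = v * star v := by
    have h2 := hz2
    rw [hzuv, map_div₀, div_mul_div_comm, conj_tc, conj_tc,
      ← toComplex_mul, ← toComplex_mul] at h2
    exact toComplex_inj.1
      ((div_eq_one_iff_eq (tc_ne_zero (mul_ne_zero hv (star_ne_zero.2 hv)))).1 h2)
  obtain ⟨x, hx⟩ := key _ u v rfl hu hv heq
  exact ⟨x, Subtype.ext (Units.ext (hx.trans hzuv.symm))⟩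

end UCGR

/-- The group of unit-modulus Gaussian rationals is isomorphic to the direct product of a
cyclic group of order 4 and a free abelian group of countably infinite rank. -/
theorem unitCircleGaussianRationals_structure :
    Nonempty (unitCircleGaussianRationals ≃* Multiplicative (ZMod 4 × (ℕ →₀ ℤ))) := by
  exact ⟨(MulEquiv.ofBijective UCGR.Phi ⟨UCGR.Phi_injective, UCGR.Phi_surjective⟩).symm⟩
end

section
/- Let n ≥ 3, let ζ = exp(2πi/n) ∈ ℂ, and let M be the additive subgroup of ℂ generated by the powers ζ^k, k = 0,…,n−1 (the principal n-fold symmetric module). For any z ∈ ℂ with |z| = 1, the subgroup M ∩ z·M has finite index in M if and only if z belongs to the cyclotomic field ℚ(ζ), the subfield of ℂ generated by ζ over ℚ. -/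
open Complex Polynomial

/-- The principal `n`-fold symmetric module: the additive subgroup of `ℂ` generated by
the `n`-th roots of unity `exp(2πik/n)`, `k = 0, …, n−1`. -/
noncomputable def principalModule (n : ℕ) : AddSubgroup ℂ :=
  AddSubgroup.closure
    (Set.range fun k : Fin n => Complex.exp (2 * Real.pi * Complex.I / n) ^ (k : ℕ))



/-- If `a ≠ 0` is a root of a nonzero integer polynomial, then `a * (integer polynomial in a)`
is a nonzero integer. -/
lemma aux_poly_trick (a : ℂ) (ha : a ≠ 0) :
    ∀ N : ℕ, ∀ p : Polynomial ℤ, p.natDegree ≤ N → p ≠ 0 → Polynomial.aeval a p = 0 →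
      ∃ q : Polynomial ℤ, ∃ c : ℤ, c ≠ 0 ∧ a * Polynomial.aeval a q = (c : ℂ) := by
  intro N
  induction N with
  | zero =>
    intro p hdeg hp hroot
    exfalso
    have : p = C (p.coeff 0) := Polynomial.eq_C_of_natDegree_eq_zero (Nat.le_zero.mp hdeg)
    rw [this] at hroot
    simp only [Polynomial.aeval_C] at hroot
    have : p.coeff 0 = 0 := by
      have := hroot
      simpa using this
    exact hp (by rw [‹p = C (p.coeff 0)›, this, map_zero])
  | succ N ih =>
    intro p hdeg hp hroot
    by_cases h0 : p.coeff 0 = 0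
    · -- p = X * divX p
      have hfact : X * p.divX = p := by
        have := Polynomial.X_mul_divX_add p
        rwa [h0, map_zero, add_zero] at this
      have hdivne : p.divX ≠ 0 := by
        intro h
        apply hp
        rw [← hfact, h, mul_zero]
      have hroot' : Polynomial.aeval a p.divX = 0 := by
        have : a * Polynomial.aeval a p.divX = 0 := by
          have := hroot
          rw [← hfact] at this
          simpa using this
        rcases mul_eq_zero.mp this with h | h
        · exact absurd h ha
        · exact h
      refine ih p.divX ?_ hdivne hroot'
      have : p.divX.natDegree = p.natDegree - 1 := Polynomial.natDegree_divX_eq_natDegree_tsub_one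
      omega
    · refine ⟨-p.divX, p.coeff 0, h0, ?_⟩
      have hfact := Polynomial.X_mul_divX_add p
      have : Polynomial.aeval a (X * p.divX + C (p.coeff 0)) = 0 := by rw [hfact]; exact hroot
      simp only [map_add, map_mul, Polynomial.aeval_X, Polynomial.aeval_C] at this
      rw [map_neg, mul_neg]
      have h2 := eq_neg_of_add_eq_zero_right this
      simpa using h2.symm

lemma aux_lemB (S : Subalgebra ℤ ℂ) (hFG : S.toSubmodule.FG) (a : ℂ) (haS : a ∈ S)
    (ha : a ≠ 0) : ∃ b ∈ S, ∃ c : ℤ, c ≠ 0 ∧ a * b = (c : ℂ) := by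
  have hint : IsIntegral ℤ a := IsIntegral.of_mem_of_fg S hFG a haS
  obtain ⟨p, hmonic, hroot⟩ := hint
  have hp : p ≠ 0 := hmonic.ne_zero
  have hroot' : Polynomial.aeval a p = 0 := by
    rwa [Polynomial.aeval_def]
  obtain ⟨q, c, hc, hqc⟩ := aux_poly_trick a ha p.natDegree p le_rfl hp hroot'
  refine ⟨Polynomial.aeval a q, ?_, c, hc, hqc⟩
  have h1 : Polynomial.aeval a q ∈ Algebra.adjoin ℤ {a} := Polynomial.aeval_mem_adjoin_singleton ℤ a
  exact Algebra.adjoin_le (by simpa using haS) h1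

lemma zeta_pow_card (n : ℕ) (hn : 0 < n) :
    Complex.exp (2 * Real.pi * Complex.I / n) ^ n = 1 := by
  rw [← Complex.exp_nat_mul]
  rw [mul_div_cancel₀ _ (by exact_mod_cast hn.ne' : (n : ℂ) ≠ 0)]
  exact Complex.exp_two_pi_mul_I

lemma zeta_pow_mem (n : ℕ) (hn : 0 < n) (m : ℕ) :
    Complex.exp (2 * Real.pi * Complex.I / n) ^ m ∈ principalModule n := by
  rw [pow_eq_pow_mod m (zeta_pow_card n hn)]
  exact AddSubgroup.subset_closure ⟨⟨m % n, Nat.mod_lt _ hn⟩, rfl⟩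

lemma principalModule_mul_mem (n : ℕ) (hn : 0 < n) {x y : ℂ}
    (hx : x ∈ principalModule n) (hy : y ∈ principalModule n) :
    x * y ∈ principalModule n := by
  have key : ∀ j : ℕ, ∀ y ∈ principalModule n,
      Complex.exp (2 * Real.pi * Complex.I / n) ^ j * y ∈ principalModule n := by
    intro j y hy
    induction hy using AddSubgroup.closure_induction with
    | mem w hw =>
      obtain ⟨k, rfl⟩ := hw
      rw [← pow_add]
      exact zeta_pow_mem n hn _
    | zero => simpa using (principalModule n).zero_mem
    | add a b _ _ ha hb => rw [mul_add]; exact add_mem ha hb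
    | neg a _ ha => rw [mul_neg]; exact neg_mem ha
  induction hx using AddSubgroup.closure_induction with
  | mem w hw =>
    obtain ⟨k, rfl⟩ := hw
    exact key _ _ hy
  | zero => simpa using (principalModule n).zero_mem
  | add a b _ _ ha hb => rw [add_mul]; exact add_mem ha hb
  | neg a _ ha => rw [neg_mul]; exact neg_mem ha

/-- `principalModule n` as a subalgebra of `ℂ`. -/
noncomputable def principalAlgebra (n : ℕ) (hn : 0 < n) : Subalgebra ℤ ℂ where
  carrier := principalModule n
  mul_mem' := principalModule_mul_mem n hn
  one_mem' := by simpa using zeta_pow_mem n hn 0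
  add_mem' := fun hx hy => add_mem hx hy
  zero_mem' := zero_mem _
  algebraMap_mem' := fun r => by
    have h1 : (1 : ℂ) ∈ principalModule n := by simpa using zeta_pow_mem n hn 0
    simpa using zsmul_mem h1 r

lemma principalAlgebra_fg (n : ℕ) (hn : 0 < n) : (principalAlgebra n hn).toSubmodule.FG := by
  classical
  set s : Set ℂ :=
    Set.range fun k : Fin n => Complex.exp (2 * Real.pi * Complex.I / n) ^ (k : ℕ) with hs
  have hfin : s.Finite := Set.finite_range _
  refine ⟨hfin.toFinset, ?_⟩
  rw [Set.Finite.coe_toFinset]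
  apply le_antisymm
  · rw [Submodule.span_le]
    rintro x ⟨k, rfl⟩
    exact zeta_pow_mem n hn _
  · intro x hx
    have hx' : x ∈ AddSubgroup.closure s := hx
    have : AddSubgroup.closure s ≤ (Submodule.span ℤ s).toAddSubgroup :=
      AddSubgroup.closure_le _ |>.mpr Submodule.subset_span
    exact this hx'

lemma core_relindex (n : ℕ) (hn : 0 < n) (a : ℂ) (haM : a ∈ principalModule n) (ha : a ≠ 0) :
    AddSubgroup.relIndex (AddSubgroup.map (AddMonoidHom.mulLeft a) (principalModule n))
      (principalModule n) ≠ 0 := by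
  classical
  obtain ⟨b, hbM, c, hc, habc⟩ := aux_lemB (principalAlgebra n hn) (principalAlgebra_fg n hn) a haM ha
  set M := principalModule n with hM
  set H := (AddSubgroup.map (AddMonoidHom.mulLeft a) M).addSubgroupOf M with hH
  haveI hMfg : AddGroup.FG ↥M := by
    rw [AddGroup.fg_iff_addSubgroup_fg]
    exact ⟨(Set.finite_range _).toFinset, by rw [Set.Finite.coe_toFinset]; rfl⟩
  haveI : AddGroup.FG (↥M ⧸ H) := inferInstance
  haveI : Module.Finite ℤ (↥M ⧸ H) := Module.Finite.iff_addGroup_fg.mpr inferInstance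
  have htors : AddMonoid.IsTorsion (↥M ⧸ H) := by
    intro q
    obtain ⟨m, rfl⟩ := QuotientAddGroup.mk'_surjective H q
    rw [isOfFinAddOrder_iff_nsmul_eq_zero]
    refine ⟨c.natAbs, Int.natAbs_pos.mpr hc, ?_⟩
    rw [← map_nsmul, QuotientAddGroup.mk'_apply, QuotientAddGroup.eq_zero_iff]
    rw [AddSubgroup.mem_addSubgroupOf]
    have hcm : (c : ℂ) * (m : ℂ) ∈ AddSubgroup.map (AddMonoidHom.mulLeft a) M := by
      refine ⟨b * (m : ℂ), principalModule_mul_mem n hn hbM m.2, ?_⟩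
      show a * (b * (m : ℂ)) = (c : ℂ) * (m : ℂ)
      rw [← mul_assoc, habc]
    have hval : ((c.natAbs • m : ↥M) : ℂ) = (c.natAbs : ℂ) * (m : ℂ) := by
      push_cast
      rw [nsmul_eq_mul]
    rw [hval]
    have h3 : ((c.natAbs : ℂ)) = ((|c| : ℤ) : ℂ) := by
      rw [Int.abs_eq_natAbs c]; exact (Int.cast_natCast c.natAbs).symm
    rw [h3]
    rcases abs_choice c with h | h
    · rw [h]; exact hcm
    · rw [h]; push_cast; rw [neg_mul]; exact neg_mem hcm
  haveI : Finite (↥M ⧸ H) := AddCommGroup.finite_of_fg_torsion _ htors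
  have : H.index ≠ 0 := AddSubgroup.index_ne_zero_of_finite
  exact this


/-- For `n ≥ 3`, `ζ = exp(2πi/n)` and `z ∈ ℂ` of modulus `1`, the subgroup `M ∩ z·M`
of the principal `n`-fold module `M` has finite index in `M` if and only if `z` lies
in the cyclotomic field `ℚ(ζ)`, the subfield of `ℂ` generated by `ζ`. -/
theorem principalModule_coincidence_iff_mem_cyclotomicField (n : ℕ) (hn : 3 ≤ n)
    (z : ℂ) (hz : ‖z‖ = 1) :
    (AddSubgroup.relIndex
        (principalModule n ⊓
          AddSubgroup.map (AddMonoidHom.mulLeft z) (principalModule n))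
        (principalModule n) ≠ 0) ↔
      z ∈ Subfield.closure {Complex.exp (2 * Real.pi * Complex.I / n)} := by
  have hn' : 0 < n := by omega
  set ζ : ℂ := Complex.exp (2 * Real.pi * Complex.I / n) with hζ
  set M : AddSubgroup ℂ := principalModule n with hMdef
  have hone : (1 : ℂ) ∈ M := by simpa using zeta_pow_mem n hn' 0
  have hz0 : z ≠ 0 := by
    intro h
    rw [h] at hz
    simp at hz
  have hMsub : ∀ x ∈ M, x ∈ Subfield.closure {ζ} := by
    have hle : M ≤ (Subfield.closure {ζ}).toSubring.toAddSubgroup := by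
      apply (AddSubgroup.closure_le _).mpr
      rintro x ⟨k, rfl⟩
      exact pow_mem (Subfield.subset_closure (Set.mem_singleton ζ)) _
    exact fun x hx => hle hx
  constructor
  · -- forward direction
    intro h
    set A := M ⊓ AddSubgroup.map (AddMonoidHom.mulLeft z) M with hA
    have hAne : A ≠ ⊥ := by
      intro hbot
      apply h
      rw [hbot]
      show ((⊥ : AddSubgroup ℂ).addSubgroupOf M).index = 0
      rw [AddSubgroup.bot_addSubgroupOf, AddSubgroup.index_bot]
      haveI : Infinite ↥M := by
        refine Infinite.of_injective (fun k : ℤ => (⟨(k : ℂ), ?_⟩ : ↥M)) ?_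
        · simpa using zsmul_mem hone k
        · intro j k hjk
          have : ((j : ℂ)) = (k : ℂ) := congrArg Subtype.val hjk
          exact_mod_cast this
      exact Nat.card_eq_zero_of_infinite
    have hex : ∃ x ∈ A, x ≠ 0 := by
      by_contra hall
      push_neg at hall
      exact hAne ((AddSubgroup.eq_bot_iff_forall A).mpr hall)
    obtain ⟨x, hxA, hx0⟩ := hex
    obtain ⟨hxM, hxzM⟩ := AddSubgroup.mem_inf.mp hxA
    obtain ⟨m, hmM, hzmx⟩ := AddSubgroup.mem_map.mp hxzM
    have hzm : z * m = x := hzmx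
    have hm0 : m ≠ 0 := by
      intro h0
      rw [h0, mul_zero] at hzm
      exact hx0 hzm.symm
    have hzval : z = x / m := by
      rw [eq_div_iff hm0]
      exact hzm
    rw [hzval]
    exact div_mem (hMsub x hxM) (hMsub m hmM)
  · -- reverse direction
    intro hzK
    -- the subfield of fractions over M with integer denominators
    let F : Subfield ℂ :=
      { carrier := {x : ℂ | ∃ a ∈ M, ∃ c : ℤ, c ≠ 0 ∧ (c : ℂ) * x = a}
        zero_mem' := ⟨0, zero_mem _, 1, one_ne_zero, by simp⟩
        one_mem' := ⟨1, hone, 1, one_ne_zero, by simp⟩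
        add_mem' := by
          rintro x y ⟨a₁, ha₁, c₁, hc₁, h₁⟩ ⟨a₂, ha₂, c₂, hc₂, h₂⟩
          refine ⟨(c₂ : ℂ) * a₁ + (c₁ : ℂ) * a₂, ?_, c₁ * c₂, mul_ne_zero hc₁ hc₂, ?_⟩
          · exact add_mem (by simpa [zsmul_eq_mul] using zsmul_mem ha₁ c₂)
              (by simpa [zsmul_eq_mul] using zsmul_mem ha₂ c₁)
          · push_cast
            linear_combination (c₂ : ℂ) * h₁ + (c₁ : ℂ) * h₂
        neg_mem' := by
          rintro x ⟨a, ha, c, hc, h⟩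
          exact ⟨-a, neg_mem ha, c, hc, by linear_combination -h⟩
        mul_mem' := by
          rintro x y ⟨a₁, ha₁, c₁, hc₁, h₁⟩ ⟨a₂, ha₂, c₂, hc₂, h₂⟩
          refine ⟨a₁ * a₂, principalModule_mul_mem n hn' ha₁ ha₂, c₁ * c₂,
            mul_ne_zero hc₁ hc₂, ?_⟩
          push_cast
          linear_combination (c₂ : ℂ) * y * h₁ + a₁ * h₂
        inv_mem' := by
          intro x hx
          by_cases hx0 : x = 0
          · exact ⟨0, zero_mem _, 1, one_ne_zero, by simp [hx0]⟩
          obtain ⟨a, ha, c, hc, h⟩ := hx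
          have ha0 : a ≠ 0 := by
            intro h0
            rw [h0] at h
            exact hx0 (by
              have hcc : (c : ℂ) ≠ 0 := Int.cast_ne_zero.mpr hc
              exact (mul_eq_zero.mp h).resolve_left hcc)
          obtain ⟨b, hbM, d, hd, habd⟩ :=
            aux_lemB (principalAlgebra n hn') (principalAlgebra_fg n hn') a ha ha0
          refine ⟨(c : ℂ) * b, by simpa [zsmul_eq_mul] using zsmul_mem (show b ∈ M from hbM) c, d, hd, ?_⟩
          have hkey : (d : ℂ) = (c : ℂ) * b * x := by
            linear_combination habd.symm + b * h.symm
          rw [hkey, mul_assoc, mul_assoc]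
          rw [mul_inv_cancel₀ hx0, mul_one] }
    have hζF : ζ ∈ F := ⟨ζ, by simpa using zeta_pow_mem n hn' 1, 1, one_ne_zero, by simp⟩
    have hsub : Subfield.closure {ζ} ≤ F :=
      (Subfield.closure_le).mpr (Set.singleton_subset_iff.mpr hζF)
    obtain ⟨a, haM, c, hc, hca⟩ := hsub hzK
    have ha0 : a ≠ 0 := by
      intro h0
      rw [h0] at hca
      rcases mul_eq_zero.mp hca with h | h
      · exact hc (by exact_mod_cast h)
      · exact hz0 h
    have h₀le : AddSubgroup.map (AddMonoidHom.mulLeft a) M ≤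
        M ⊓ AddSubgroup.map (AddMonoidHom.mulLeft z) M := by
      rintro x hx
      obtain ⟨m, hm, rfl⟩ := AddSubgroup.mem_map.mp hx
      refine AddSubgroup.mem_inf.mpr ⟨principalModule_mul_mem n hn' haM hm, ?_⟩
      refine AddSubgroup.mem_map.mpr ⟨(c : ℂ) * m, by simpa [zsmul_eq_mul] using zsmul_mem hm c, ?_⟩
      show z * ((c : ℂ) * m) = AddMonoidHom.mulLeft a m
      show z * ((c : ℂ) * m) = a * m
      linear_combination m * hca
    intro h0
    exact core_relindex n hn' a haM ha0
      (AddSubgroup.relIndex_eq_zero_of_le_left h₀le h0)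
end

section
/- Let n ≥ 3, let K = ℚ(ζ_n) be the n-th cyclotomic field with ring of integers 𝓞_K, and let σ be the ℚ-algebra automorphism of K with σ(ζ) = ζ⁻¹. Suppose γ ∈ K satisfies γ·σ(γ) = 1 and that its coincidence index m, the index of the additive subgroup 𝓞_K ∩ γ·𝓞_K in 𝓞_K, is finite. If gcd(m, n) = 1, then m ≡ 1 (mod n). -/
open NumberField

/-- The ring of integers of a field `K`, viewed as an additive subgroup of `K`. -/
noncomputable def integersSubgroup (K : Type*) [Field K] : AddSubgroup K :=
  AddMonoidHom.range (algebraMap (𝓞 K) K).toAddMonoidHom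


open MulAction Subgroup

lemma aux_card_mod {Q : Type*} [CommRing Q] [Fintype Q] [Nontrivial Q] (n : ℕ) (hn : 2 ≤ n)
    (z : Q) (hzn : z ^ n = 1)
    (hu : ∀ k, 0 < k → k < n → IsUnit (1 - z ^ k)) :
    Fintype.card Q % n = 1 := by
  classical
  have hz : IsUnit z := by
    refine IsUnit.of_mul_eq_one (a := z) (z ^ (n - 1)) ?_
    rw [← pow_succ']
    have h : n - 1 + 1 = n := by omega
    rw [h, hzn]
  have huval : (hz.unit : Q) = z := hz.unit_spec
  have hun : hz.unit ^ n = 1 := by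
    ext
    rw [Units.val_pow_eq_pow_val, huval, hzn, Units.val_one]
  have hku : ∀ k, 0 < k → k < n → hz.unit ^ k ≠ 1 := by
    intro k hk1 hk2 h
    have hzk : z ^ k = 1 := by
      have h2 := congrArg (Units.val) h
      rw [Units.val_pow_eq_pow_val, huval, Units.val_one] at h2
      exact h2
    have h3 := hu k hk1 hk2
    rw [hzk, sub_self] at h3
    exact h3.ne_zero rfl
  have hord : orderOf hz.unit = n := by
    rw [orderOf_eq_iff (by omega)]
    exact ⟨hun, fun m hmn hm0 => hku m hm0 hmn⟩
  haveI : ∀ a : zpowers hz.unit, Fintype (fixedBy Q a) := fun a => Fintype.ofFinite _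
  haveI : Fintype (orbitRel.Quotient (zpowers hz.unit) Q) := Fintype.ofFinite _
  have burnside := MulAction.sum_card_fixedBy_eq_card_orbits_mul_card_group (zpowers hz.unit) Q
  have hcardG : Fintype.card (zpowers hz.unit) = n := by
    rw [Fintype.card_zpowers, hord]
  have hfix1 : Fintype.card (fixedBy Q (1 : zpowers hz.unit)) = Fintype.card Q := by
    apply Fintype.card_congr
    apply Equiv.subtypeUnivEquiv
    intro q
    simp [MulAction.fixedBy]
  have hfixg : ∀ a : zpowers hz.unit, a ≠ 1 → Fintype.card (fixedBy Q a) = 1 := by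
    intro a ha
    obtain ⟨j, hj⟩ := a.2
    have hnn : (0:ℤ) < (n:ℤ) := by exact_mod_cast (by omega : 0 < n)
    have hkj : (((j % (n : ℤ)).toNat : ℤ)) = j % (n:ℤ) :=
      Int.toNat_of_nonneg (Int.emod_nonneg _ (by omega))
    have hka : hz.unit ^ ((j % (n : ℤ)).toNat) = (a : Qˣ) := by
      rw [← hj, ← zpow_natCast, hkj, ← hord, zpow_mod_orderOf]
    set k : ℕ := (j % (n : ℤ)).toNat with hk_def
    have hkn : k < n := by
      have := Int.emod_lt_of_pos j hnn
      omega
    have hk0 : 0 < k := by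
      rcases Nat.eq_zero_or_pos k with h0 | h0
      · exact absurd (Subtype.ext (by rw [← hka, h0, pow_zero]; rfl)) ha
      · exact h0
    have hset : fixedBy Q a = {0} := by
      ext q
      simp only [MulAction.fixedBy, Set.mem_setOf_eq, Set.mem_singleton_iff]
      have hsmul : a • q = z ^ k * q := by
        show ((a : Qˣ) : Q) * q = z ^ k * q
        rw [← hka, Units.val_pow_eq_pow_val, huval]
      rw [hsmul]
      constructor
      · intro h
        have h0 : (1 - z ^ k) * q = 0 := by rw [sub_mul, one_mul, h, sub_self]
        exact ((hu k hk0 hkn).mul_right_eq_zero).mp h0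
      · intro h; rw [h, mul_zero]
    have : Fintype.card (fixedBy Q a) = Fintype.card ({0} : Set Q) :=
      Fintype.card_congr (Equiv.setCongr hset)
    rw [this]
    simp
  have hsum : (∑ a : zpowers hz.unit, Fintype.card (fixedBy Q a))
      = Fintype.card Q + (n - 1) := by
    rw [← Finset.add_sum_erase _ _ (Finset.mem_univ (1 : zpowers hz.unit)), hfix1]
    congr 1
    rw [Finset.sum_congr rfl (fun a ha => hfixg a (Finset.ne_of_mem_erase ha))]
    rw [Finset.sum_const, smul_eq_mul, mul_one, Finset.card_erase_of_mem (Finset.mem_univ _),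
      Finset.card_univ, hcardG]
  rw [hsum, hcardG] at burnside
  have hN1 : 0 < Fintype.card (orbitRel.Quotient (zpowers hz.unit) Q) :=
    Fintype.card_pos_iff.mpr ⟨Quotient.mk (orbitRel (zpowers hz.unit) Q) 0⟩
  obtain ⟨s, hs⟩ : ∃ s, Fintype.card (orbitRel.Quotient (zpowers hz.unit) Q) = s + 1 :=
    ⟨Fintype.card (orbitRel.Quotient (zpowers hz.unit) Q) - 1, by omega⟩
  rw [hs] at burnside
  have e := burnside.trans (by ring : (s+1)*n = s*n+n)
  obtain ⟨c, hc⟩ : ∃ c, c = s * n := ⟨_, rfl⟩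
  rw [← hc] at e
  have h2 : Fintype.card Q = c + 1 := by omega
  rw [h2, hc, mul_comm, Nat.mul_add_mod]
  exact Nat.mod_eq_of_lt (by omega)

set_option maxHeartbeats 1000000 in
set_option synthInstance.maxHeartbeats 400000 in
open NumberField in
theorem aux_main {K : Type*} [Field K] [CharZero K] (n : ℕ+) (hn : 3 ≤ (n : ℕ))
    (ζ : K) (hζ : IsPrimitiveRoot ζ (n : ℕ)) (γ : K) (m : ℕ) (hm : m ≠ 0)
    (hidx : AddSubgroup.relIndex
        (AddMonoidHom.range (algebraMap (𝓞 K) K).toAddMonoidHom ⊓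
          AddSubgroup.map (AddMonoidHom.mulLeft γ)
            (AddMonoidHom.range (algebraMap (𝓞 K) K).toAddMonoidHom))
        (AddMonoidHom.range (algebraMap (𝓞 K) K).toAddMonoidHom) = m)
    (hcop : Nat.gcd m n = 1) :
    m % n = 1 := by
  classical
  rcases eq_or_lt_of_le (Nat.one_le_iff_ne_zero.mpr hm) with hm1 | hm2
  · rw [← hm1]
    exact Nat.mod_eq_of_lt (by omega)
  have hmem : ∀ (c x : 𝓞 K),
      (algebraMap (𝓞 K) K).toAddMonoidHom x ∈
        (AddMonoidHom.range (algebraMap (𝓞 K) K).toAddMonoidHom ⊓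
          AddSubgroup.map (AddMonoidHom.mulLeft γ)
            (AddMonoidHom.range (algebraMap (𝓞 K) K).toAddMonoidHom)) →
      (algebraMap (𝓞 K) K).toAddMonoidHom (c * x) ∈
        (AddMonoidHom.range (algebraMap (𝓞 K) K).toAddMonoidHom ⊓
          AddSubgroup.map (AddMonoidHom.mulLeft γ)
            (AddMonoidHom.range (algebraMap (𝓞 K) K).toAddMonoidHom)) := by
    intro c x hx
    obtain ⟨hx1, hx2⟩ := hx
    obtain ⟨y, hyG, hy⟩ := hx2
    obtain ⟨o, ho⟩ := hyG
    constructor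
    · exact ⟨c * x, rfl⟩
    · refine ⟨(c : K) * y, ⟨c * o, ?_⟩, ?_⟩
      · show ((c * o : 𝓞 K) : K) = (c : K) * y
        rw [← ho]; push_cast; rfl
      · show γ * ((c : K) * y) = ((c * x : 𝓞 K) : K)
        have hyy : γ * y = (x : K) := hy
        push_cast
        linear_combination (c : K) * hyy
  let I : Ideal (𝓞 K) :=
    { carrier := {x : 𝓞 K | (algebraMap (𝓞 K) K).toAddMonoidHom x ∈
        (AddMonoidHom.range (algebraMap (𝓞 K) K).toAddMonoidHom ⊓
          AddSubgroup.map (AddMonoidHom.mulLeft γ)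
            (AddMonoidHom.range (algebraMap (𝓞 K) K).toAddMonoidHom))}
      add_mem' := fun {a b} ha hb => by
        simp only [Set.mem_setOf_eq, map_add] at *
        exact AddSubgroup.add_mem _ ha hb
      zero_mem' := by
        simp only [Set.mem_setOf_eq, map_zero]
        exact AddSubgroup.zero_mem _
      smul_mem' := fun c x hx => by
        simp only [Set.mem_setOf_eq, smul_eq_mul] at *
        exact hmem c x hx }
  have hIindex : Nat.card (𝓞 K ⧸ I) = m := by
    have h1 : Submodule.cardQuot I = Nat.card (𝓞 K ⧸ I) := Submodule.cardQuot_apply I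
    have h2 : I.toAddSubgroup = AddSubgroup.comap (algebraMap (𝓞 K) K).toAddMonoidHom
        (AddMonoidHom.range (algebraMap (𝓞 K) K).toAddMonoidHom ⊓
          AddSubgroup.map (AddMonoidHom.mulLeft γ)
            (AddMonoidHom.range (algebraMap (𝓞 K) K).toAddMonoidHom)) := by
      ext x; exact Iff.rfl
    have h3 : Submodule.cardQuot I = (AddSubgroup.comap (algebraMap (𝓞 K) K).toAddMonoidHom
        (AddMonoidHom.range (algebraMap (𝓞 K) K).toAddMonoidHom ⊓
          AddSubgroup.map (AddMonoidHom.mulLeft γ)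
            (AddMonoidHom.range (algebraMap (𝓞 K) K).toAddMonoidHom))).index := by
      rw [Submodule.cardQuot, h2]
    rw [← h1, h3, AddSubgroup.index_comap]
    exact hidx
  haveI : Finite (𝓞 K ⧸ I) := by
    rcases Nat.card_ne_zero.mp (hIindex ▸ hm) with ⟨_, hf⟩
    exact hf
  haveI : Fintype (𝓞 K ⧸ I) := Fintype.ofFinite _
  have hcard : Fintype.card (𝓞 K ⧸ I) = m := by
    rw [← Nat.card_eq_fintype_card, hIindex]
  haveI : Nontrivial (𝓞 K ⧸ I) := by
    rw [← Fintype.one_lt_card_iff_nontrivial, hcard]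
    exact hm2
  set ζ' : 𝓞 K := hζ.toInteger with hζ'
  set z : 𝓞 K ⧸ I := Ideal.Quotient.mk I ζ' with hz
  have hζn : ζ' ^ (n : ℕ) = 1 := by
    apply NumberField.RingOfIntegers.coe_injective
    rw [map_pow, map_one]
    exact hζ.pow_eq_one
  have hzn : z ^ (n : ℕ) = 1 := by
    rw [hz, ← map_pow, hζn, map_one]
  have hprodO : (∏ k ∈ Finset.range ((n : ℕ) - 1), (1 - ζ' ^ (k + 1))) = ((n : ℕ) : 𝓞 K) := by
    apply NumberField.RingOfIntegers.coe_injective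
    rw [map_natCast, map_prod]
    have hcoe : ∀ kk : ℕ, (algebraMap (𝓞 K) K) (1 - ζ' ^ (kk + 1)) = 1 - ζ ^ (kk + 1) := fun kk => by
      rw [map_sub, map_one, map_pow]
      rfl
    rw [Finset.prod_congr rfl (fun kk _ => hcoe kk)]
    have hn1 : (n : ℕ) - 1 + 1 = (n : ℕ) := by omega
    have hζ2 : IsPrimitiveRoot ζ (((n : ℕ) - 1) + 1) := by rw [hn1]; exact hζ
    rw [hζ2.prod_one_sub_pow_eq_order]
    have harith : ((n : ℕ) - 1 : ℕ) + 1 = (n : ℕ) := by omega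
    exact_mod_cast congrArg (Nat.cast : ℕ → K) harith
  have hprodQ : (∏ k ∈ Finset.range ((n : ℕ) - 1), (1 - z ^ (k + 1)))
      = ((n : ℕ) : 𝓞 K ⧸ I) := by
    rw [← map_natCast (Ideal.Quotient.mk I), ← hprodO, map_prod]
    simp only [map_sub, map_one, map_pow, ← hz]
  have hmzero : ((m : ℕ) : 𝓞 K ⧸ I) = 0 := by
    rw [← hcard]
    exact Nat.cast_card_eq_zero _
  have hnunit : IsUnit (((n : ℕ) : 𝓞 K ⧸ I)) := by
    have hbezout : (1 : ℤ) = m * Nat.gcdA m n + (n : ℕ) * Nat.gcdB m n := by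
      have := Nat.gcd_eq_gcd_ab m (n : ℕ)
      rw [hcop] at this
      exact_mod_cast this
    have hcast := congrArg (fun t : ℤ => (Int.cast t : 𝓞 K ⧸ I)) hbezout
    push_cast at hcast
    rw [hmzero, zero_mul, zero_add] at hcast
    exact IsUnit.of_mul_eq_one _ hcast.symm
  have hu : ∀ k, 0 < k → k < (n : ℕ) → IsUnit (1 - z ^ k) := by
    intro k hk0 hkn
    apply isUnit_of_dvd_unit _ (hprodQ ▸ hnunit)
    have hk : k - 1 ∈ Finset.range ((n : ℕ) - 1) := Finset.mem_range.mpr (by omega)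
    have hdvd := Finset.dvd_prod_of_mem (fun j => (1 - z ^ (j + 1))) hk
    have hkk : k - 1 + 1 = k := by omega
    simpa only [hkk] using hdvd
  have hfinal := aux_card_mod (n : ℕ) (by omega) z hzn hu
  rwa [hcard] at hfinal

/-- Let `K = ℚ(ζₙ)` (`n ≥ 3`) and `σ` the `ℚ`-automorphism with `σ(ζ) = ζ⁻¹`.
If `γ ∈ K` satisfies `γ·σ(γ) = 1` and its coincidence index `m` (the index of
`𝓞_K ∩ γ·𝓞_K` in `𝓞_K`) is finite, then `gcd(m,n) = 1` implies `m ≡ 1 (mod n)`. -/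
theorem cyclotomic_coincidenceIndex_mod (n : ℕ+) (hn : 3 ≤ (n : ℕ))
    (ζ : CyclotomicField n ℚ) (hζ : IsPrimitiveRoot ζ (n : ℕ))
    (σ : CyclotomicField n ℚ ≃ₐ[ℚ] CyclotomicField n ℚ) (hσ : σ ζ = ζ⁻¹)
    (γ : CyclotomicField n ℚ) (hγ : γ * σ γ = 1) (m : ℕ) (hm : m ≠ 0)
    (hidx : AddSubgroup.relIndex
        (integersSubgroup (CyclotomicField n ℚ) ⊓
          AddSubgroup.map (AddMonoidHom.mulLeft γ)
            (integersSubgroup (CyclotomicField n ℚ)))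
        (integersSubgroup (CyclotomicField n ℚ)) = m)
    (hcop : Nat.gcd m n = 1) :
    m % n = 1 := by
  exact aux_main n hn ζ hζ γ m hm hidx hcop
end

section
/- Let n ≥ 3, let K = ℚ(ζ_n) be the n-th cyclotomic field with ring of integers 𝓞_K and automorphism σ determined by σ(ζ) = ζ⁻¹, and assume the class number of K is 1. Then a positive integer m is a coincidence index — i.e. there exists γ ∈ K with γ·σ(γ) = 1 whose coincidence index equals m — if and only if m lies in the multiplicative submonoid of ℕ generated by the basic indices, namely the absolute norms of those nonzero prime ideals P of 𝓞_K with σ(P) ≠ P. -/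
open NumberField

set_option synthInstance.maxHeartbeats 1000000
set_option maxHeartbeats 2000000

section Aux

variable {K : Type*} [Field K] [NumberField K]

/-- If `γ = a / b` with `a, b` coprime algebraic integers, then the coincidence index of `γ`
is the absolute norm of the ideal generated by the numerator `a`. -/
lemma aux_relindex_eq_absNorm (γ : K) (a b : 𝓞 K)
    (hγ : γ * algebraMap (𝓞 K) K b = algebraMap (𝓞 K) K a) (hab : IsCoprime a b) :
    AddSubgroup.relIndex
      (integersSubgroup K ⊓
        AddSubgroup.map (AddMonoidHom.mulLeft γ) (integersSubgroup K))
      (integersSubgroup K) = Ideal.absNorm (Ideal.span {a}) := by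
  classical
  have key : ∀ x : 𝓞 K, (algebraMap (𝓞 K) K).toAddMonoidHom x = algebraMap (𝓞 K) K x :=
    fun _ => rfl
  have hinj : Function.Injective (algebraMap (𝓞 K) K) := RingOfIntegers.coe_injective
  have h1 : integersSubgroup K
      = AddSubgroup.map (algebraMap (𝓞 K) K).toAddMonoidHom ⊤ := by
    rw [integersSubgroup, AddMonoidHom.range_eq_map]
  have hcomap : AddSubgroup.comap (algebraMap (𝓞 K) K).toAddMonoidHom
      (integersSubgroup K ⊓
        AddSubgroup.map (AddMonoidHom.mulLeft γ) (integersSubgroup K))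
      = (Ideal.span {a} : Ideal (𝓞 K)).toAddSubgroup := by
    ext x
    simp only [AddSubgroup.mem_comap, AddSubgroup.mem_inf, AddSubgroup.mem_map,
      integersSubgroup, AddMonoidHom.mem_range, key,
      Submodule.mem_toAddSubgroup]
    constructor
    · rintro ⟨-, y, ⟨c, rfl⟩, hy⟩
      replace hy : γ * algebraMap (𝓞 K) K c = algebraMap (𝓞 K) K x := hy
      have h0 : algebraMap (𝓞 K) K (a * c) = algebraMap (𝓞 K) K (x * b) := by
        rw [map_mul, map_mul, ← hγ, ← hy]; ring
      have h2 : a * c = x * b := hinj h0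
      exact Ideal.mem_span_singleton.mpr (hab.dvd_of_dvd_mul_right ⟨c, h2.symm⟩)
    · intro hx
      obtain ⟨d, rfl⟩ := Ideal.mem_span_singleton.mp hx
      refine ⟨⟨a * d, rfl⟩, algebraMap (𝓞 K) K (d * b), ⟨d * b, rfl⟩, ?_⟩
      show γ * algebraMap (𝓞 K) K (d * b) = algebraMap (𝓞 K) K (a * d)
      rw [map_mul, map_mul, ← hγ]; ring
  nth_rw 3 [h1]
  rw [← AddSubgroup.relIndex_comap, AddSubgroup.relIndex_top_right, hcomap]
  rfl

/-- The absolute norm of an ideal is invariant under a ring automorphism. -/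
lemma aux_absNorm_map (τ : 𝓞 K ≃ₐ[ℤ] 𝓞 K) (I : Ideal (𝓞 K)) :
    Ideal.absNorm (Ideal.map τ I) = Ideal.absNorm I := by
  rw [Ideal.absNorm_apply, Ideal.absNorm_apply, Submodule.cardQuot_apply,
    Submodule.cardQuot_apply]
  exact (Nat.card_congr (Ideal.quotientEquiv I (Ideal.map τ I) τ.toRingEquiv rfl).toEquiv).symm

lemma aux_map_map (τ : 𝓞 K ≃ₐ[ℤ] 𝓞 K) (hτ : ∀ x, τ (τ x) = x) (I : Ideal (𝓞 K)) :
    Ideal.map τ (Ideal.map τ I) = I := by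
  ext y
  rw [Ideal.mem_map_of_equiv]
  constructor
  · rintro ⟨x, hx, rfl⟩
    rw [Ideal.mem_map_of_equiv] at hx
    obtain ⟨z, hz, rfl⟩ := hx
    rwa [hτ]
  · intro hy
    refine ⟨τ y, ?_, hτ y⟩
    exact Ideal.mem_map_of_equiv τ (τ y) |>.mpr ⟨y, hy, rfl⟩

lemma aux_map_dvd_iff (τ : 𝓞 K ≃ₐ[ℤ] 𝓞 K) (hτ : ∀ x, τ (τ x) = x) (I J : Ideal (𝓞 K)) :
    Ideal.map τ I ∣ Ideal.map τ J ↔ I ∣ J := by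
  have h : ∀ X Y : Ideal (𝓞 K), X ∣ Y → Ideal.map τ X ∣ Ideal.map τ Y := by
    rintro X Y ⟨Z, rfl⟩
    exact ⟨Ideal.map τ Z, (Ideal.map_mul τ X Z)⟩
  refine ⟨fun hd => ?_, h I J⟩
  have := h _ _ hd
  rwa [aux_map_map τ hτ, aux_map_map τ hτ] at this

/-- If an ideal is coprime to its image under `τ`, then its norm is a product of norms of
prime ideals moved by `τ`. -/
lemma aux_absNorm_mem_closure (τ : 𝓞 K ≃ₐ[ℤ] 𝓞 K) (I : Ideal (𝓞 K))
    (hcop : IsCoprime I (Ideal.map τ I)) :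
    Ideal.absNorm I ∈ Submonoid.closure
      {k : ℕ | ∃ P : Ideal (𝓞 K), P ≠ ⊥ ∧ P.IsPrime ∧ Ideal.map τ P ≠ P ∧
        Ideal.absNorm P = k} := by
  classical
  induction I using UniqueFactorizationMonoid.induction_on_prime with
  | h₁ =>
      exfalso
      have h := hcop.sup_eq
      rw [Ideal.zero_eq_bot, Ideal.map_bot, sup_idem] at h
      exact absurd h bot_ne_top
  | h₂ I hI =>
      rw [Ideal.isUnit_iff] at hI
      subst hI
      rw [Ideal.absNorm_top]
      exact Submonoid.one_mem _
  | h₃ I P hI0 hP ih =>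
      rw [Ideal.map_mul] at hcop
      have hPP : Ideal.map τ P ≠ P := by
        intro hfix
        have h1 : P ∣ P * I := dvd_mul_right _ _
        have h2 : P ∣ Ideal.map τ P * Ideal.map τ I := by rw [hfix]; exact dvd_mul_right _ _
        exact hP.not_unit (hcop.isUnit_of_dvd' h1 h2)
      have hcI : IsCoprime I (Ideal.map τ I) :=
        (hcop.of_isCoprime_of_dvd_left (dvd_mul_left _ _)).of_isCoprime_of_dvd_right
          (dvd_mul_left _ _)
      rw [map_mul Ideal.absNorm]
      exact Submonoid.mul_mem _
        (Submonoid.subset_closure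
          ⟨P, hP.ne_zero, Ideal.isPrime_of_prime hP, hPP, rfl⟩)
        (ih hcI)

lemma aux_coprime_of_prime_not_dvd {P X : Ideal (𝓞 K)} (hP : P.IsPrime) (hP0 : P ≠ ⊥)
    (h : ¬ P ∣ X) : IsCoprime P X := by
  have hM : P.IsMaximal := Ideal.IsPrime.isMaximal hP hP0
  rw [Ideal.isCoprime_iff_sup_eq]
  refine hM.1.2 _ (lt_of_le_of_ne le_sup_left fun he => ?_)
  exact h (Ideal.dvd_iff_le.mpr (le_sup_right.trans he.ge))

/-- Merging step: norms of ideals coprime to their `τ`-image are multiplicatively closed. -/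
lemma aux_merge (τ : 𝓞 K ≃ₐ[ℤ] 𝓞 K) (hτ : ∀ x, τ (τ x) = x) (J : Ideal (𝓞 K)) :
    IsCoprime J (Ideal.map τ J) →
    ∀ I₁ : Ideal (𝓞 K), IsCoprime I₁ (Ideal.map τ I₁) →
    ∃ B : Ideal (𝓞 K), IsCoprime B (Ideal.map τ B) ∧
      Ideal.absNorm B = Ideal.absNorm I₁ * Ideal.absNorm J := by
  classical
  induction J using UniqueFactorizationMonoid.induction_on_prime with
  | h₁ =>
      intro hcop _ _
      exfalso
      have h := hcop.sup_eq
      rw [Ideal.zero_eq_bot, Ideal.map_bot, sup_idem] at h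
      exact absurd h bot_ne_top
  | h₂ J hJ =>
      intro _ I₁ hI₁
      rw [Ideal.isUnit_iff] at hJ
      subst hJ
      exact ⟨I₁, hI₁, by rw [Ideal.absNorm_top, mul_one]⟩
  | h₃ J P hJ0 hP ih =>
      intro hcop I₁ hI₁
      rw [Ideal.map_mul] at hcop
      have hPprime : P.IsPrime := Ideal.isPrime_of_prime hP
      have hP0 : P ≠ ⊥ := hP.ne_zero
      have hPP : Ideal.map τ P ≠ P := by
        intro hfix
        have h1 : P ∣ P * J := dvd_mul_right _ _
        have h2 : P ∣ Ideal.map τ P * Ideal.map τ J := by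
          rw [hfix]; exact dvd_mul_right _ _
        exact hP.not_unit (hcop.isUnit_of_dvd' h1 h2)
      have hcJ : IsCoprime J (Ideal.map τ J) :=
        (hcop.of_isCoprime_of_dvd_left (dvd_mul_left _ _)).of_isCoprime_of_dvd_right
          (dvd_mul_left _ _)
      obtain ⟨B₀, hB₀, hNB₀⟩ := ih hcJ I₁ hI₁
      have hchoice : ∃ Q : Ideal (𝓞 K), Q.IsPrime ∧ Q ≠ ⊥ ∧ Ideal.map τ Q ≠ Q ∧
          Ideal.absNorm Q = Ideal.absNorm P ∧ ¬ Q ∣ Ideal.map τ B₀ := by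
        by_cases hd : P ∣ Ideal.map τ B₀
        · haveI := hPprime
          refine ⟨Ideal.map τ P, Ideal.map_isPrime_of_equiv τ, ?_, ?_, aux_absNorm_map τ P, ?_⟩
          · intro hb
            exact hP0 (by simpa [aux_map_map τ hτ] using congrArg (Ideal.map τ) hb)
          · rw [aux_map_map τ hτ]; exact fun h => hPP h.symm
          · intro hdd
            rw [aux_map_dvd_iff τ hτ] at hdd
            exact hP.not_unit (hB₀.isUnit_of_dvd' hdd hd)
        · exact ⟨P, hPprime, hP0, hPP, rfl, hd⟩
      obtain ⟨Q, hQprime, hQ0, hQQ, hQnorm, hQnd⟩ := hchoice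
      haveI := hQprime
      refine ⟨Q * B₀, ?_, ?_⟩
      · rw [Ideal.map_mul]
        have c1 : IsCoprime Q (Ideal.map τ Q) := by
          rw [Ideal.isCoprime_iff_sup_eq]
          exact Ideal.IsMaximal.coprime_of_ne (hQprime.isMaximal hQ0)
            ((Ideal.map_isPrime_of_equiv τ (I := Q)).isMaximal
              (fun hb => hQ0 (by simpa [aux_map_map τ hτ] using congrArg (Ideal.map τ) hb)))
            (Ne.symm hQQ)
        have c2 : IsCoprime Q (Ideal.map τ B₀) :=
          aux_coprime_of_prime_not_dvd hQprime hQ0 hQnd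
        have c3 : IsCoprime B₀ (Ideal.map τ Q) := by
          have hnd : ¬ Ideal.map τ Q ∣ B₀ := by
            intro hdd
            have h5 : Ideal.map τ (Ideal.map τ Q) ∣ Ideal.map τ B₀ :=
              (aux_map_dvd_iff τ hτ _ _).mpr hdd
            rw [aux_map_map τ hτ] at h5
            exact hQnd h5
          exact (aux_coprime_of_prime_not_dvd (Ideal.map_isPrime_of_equiv τ)
            (fun hb => hQ0 (by simpa [aux_map_map τ hτ] using congrArg (Ideal.map τ) hb))
            hnd).symm
        exact (c1.mul_right c2).mul_left (c3.mul_right hB₀)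
      · rw [map_mul Ideal.absNorm, map_mul Ideal.absNorm, hQnorm, hNB₀]
        ring

end Aux

/-- Let `K = ℚ(ζₙ)` (`n ≥ 3`) with `σ` the automorphism `ζ ↦ ζ⁻¹`, and assume `K` has
class number `1`. A positive integer `m` is a coincidence index (of some `γ ∈ K` with
`γ·σ(γ) = 1`) if and only if `m` lies in the multiplicative submonoid of `ℕ` generated
by the basic indices: the absolute norms of the nonzero prime ideals `P` of `𝓞_K` with
`σ(P) ≠ P`. -/
theorem cyclotomic_coincidenceIndex_iff_basic (n : ℕ+) (hn : 3 ≤ (n : ℕ))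
    (ζ : CyclotomicField n ℚ) (hζ : IsPrimitiveRoot ζ (n : ℕ))
    (σ : CyclotomicField n ℚ ≃ₐ[ℚ] CyclotomicField n ℚ) (hσ : σ ζ = ζ⁻¹)
    (m : ℕ) (hm : 0 < m) :
    letI : NumberField (CyclotomicField n ℚ) :=
      @IsCyclotomicExtension.numberField {(n : ℕ)} ℚ (CyclotomicField n ℚ) _ _
        (CyclotomicField.algebra _ _) _ _ _
    NumberField.classNumber (CyclotomicField n ℚ) = 1 →
      ((∃ γ : CyclotomicField n ℚ, γ * σ γ = 1 ∧
          AddSubgroup.relIndex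
            (integersSubgroup (CyclotomicField n ℚ) ⊓
              AddSubgroup.map (AddMonoidHom.mulLeft γ)
                (integersSubgroup (CyclotomicField n ℚ)))
            (integersSubgroup (CyclotomicField n ℚ)) = m) ↔
        m ∈ Submonoid.closure
          {k : ℕ | ∃ P : Ideal (𝓞 (CyclotomicField n ℚ)), P ≠ ⊥ ∧ P.IsPrime ∧
            Ideal.map
              (galRestrict ℤ ℚ (CyclotomicField n ℚ) (𝓞 (CyclotomicField n ℚ)) σ) P ≠ P ∧
            Ideal.absNorm P = k}) := by
  haveI : NumberField (CyclotomicField n ℚ) :=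
    @IsCyclotomicExtension.numberField {(n : ℕ)} ℚ (CyclotomicField n ℚ) _ _
      (CyclotomicField.algebra _ _) _ _ _
  intro hcl
  haveI hpid : IsPrincipalIdealRing (𝓞 (CyclotomicField n ℚ)) := by
    rwa [← NumberField.classNumber_eq_one_iff]
  -- `σ` is an involution
  have hσσ : ∀ x : CyclotomicField n ℚ, σ (σ x) = x := by
    have hadj : Algebra.adjoin ℚ ({ζ} : Set (CyclotomicField n ℚ)) = ⊤ :=
      IsCyclotomicExtension.adjoin_primitive_root_eq_top
        (h := CyclotomicField.isCyclotomicExtension (n : ℕ) ℚ) hζ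
    have heq : ((σ.trans σ).toAlgHom : _ →ₐ[ℚ] _) = AlgHom.id ℚ (CyclotomicField n ℚ) := by
      apply AlgHom.ext_of_adjoin_eq_top hadj
      rintro x rfl
      show σ (σ x) = x
      rw [hσ, map_inv₀, hσ, inv_inv]
    intro x
    exact AlgHom.congr_fun heq x
  set τ := galRestrict ℤ ℚ (CyclotomicField n ℚ) (𝓞 (CyclotomicField n ℚ)) σ with hτdef
  have hστ : ∀ x : 𝓞 (CyclotomicField n ℚ),
      σ (algebraMap _ (CyclotomicField n ℚ) x) = algebraMap _ _ (τ x) :=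
    fun x => (algebraMap_galRestrict_apply ℤ σ x).symm
  have hττ : ∀ x : 𝓞 (CyclotomicField n ℚ), τ (τ x) = x := by
    intro x
    apply RingOfIntegers.coe_injective
    rw [← hστ, ← hστ, hσσ]
  have hmapspan : ∀ a : 𝓞 (CyclotomicField n ℚ),
      Ideal.map τ (Ideal.span {a}) = Ideal.span {τ a} := by
    intro a
    rw [Ideal.map_span, Set.image_singleton]
  constructor
  · -- forward direction
    rintro ⟨γ, hγσ, hidx⟩
    have hγ0 : γ ≠ 0 := by
      rintro rfl
      rw [zero_mul] at hγσ
      exact zero_ne_one hγσ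
    obtain ⟨a, b, hrel, hmk⟩ :=
      IsFractionRing.exists_reduced_fraction (A := 𝓞 (CyclotomicField n ℚ)) γ
    have hb0 : (b : 𝓞 (CyclotomicField n ℚ)) ≠ 0 := mem_nonZeroDivisors_iff_ne_zero.mp b.2
    have hfb0 : algebraMap _ (CyclotomicField n ℚ) (b : 𝓞 (CyclotomicField n ℚ)) ≠ 0 := by
      simpa using hb0
    rw [IsFractionRing.mk'_eq_div] at hmk
    have hγb : γ * algebraMap _ (CyclotomicField n ℚ) (b : 𝓞 (CyclotomicField n ℚ))
        = algebraMap _ _ a := by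
      rw [← hmk, div_mul_cancel₀ _ hfb0]
    have hcop : IsCoprime a (b : 𝓞 (CyclotomicField n ℚ)) := hrel.isCoprime
    have hidx' := aux_relindex_eq_absNorm γ a b hγb hcop
    have hfa0 : algebraMap _ (CyclotomicField n ℚ) a ≠ 0 := by
      rw [← hγb]; exact mul_ne_zero hγ0 hfb0
    have hfτb0 : algebraMap _ (CyclotomicField n ℚ)
        (τ (b : 𝓞 (CyclotomicField n ℚ))) ≠ 0 := by
      rw [← hστ]
      intro h
      exact hfb0 (by simpa using congrArg σ.symm h)
    have hσγ : σ γ = algebraMap _ (CyclotomicField n ℚ) (τ a)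
        / algebraMap _ _ (τ (b : 𝓞 (CyclotomicField n ℚ))) := by
      rw [← hmk, map_div₀, hστ, hστ]
    have h2 : algebraMap _ (CyclotomicField n ℚ) a * algebraMap _ _ (τ a)
        = algebraMap _ _ (b : 𝓞 (CyclotomicField n ℚ))
          * algebraMap _ _ (τ (b : 𝓞 (CyclotomicField n ℚ))) := by
      have h3 := hγσ
      rw [hσγ, ← hmk, div_mul_div_comm,
        div_eq_one_iff_eq (mul_ne_zero hfb0 hfτb0)] at h3
      exact h3
    rw [← map_mul, ← map_mul] at h2
    have hprod : a * τ a = (b : 𝓞 (CyclotomicField n ℚ)) * τ (b : 𝓞 (CyclotomicField n ℚ)) :=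
      RingOfIntegers.coe_injective h2
    have hdvd1 : a ∣ (b : 𝓞 (CyclotomicField n ℚ)) * τ (b : 𝓞 (CyclotomicField n ℚ)) :=
      ⟨τ a, hprod.symm⟩
    have hdvd2 : a ∣ τ (b : 𝓞 (CyclotomicField n ℚ)) := hcop.dvd_of_dvd_mul_left hdvd1
    have hdvd3 : τ a ∣ (b : 𝓞 (CyclotomicField n ℚ)) := by
      have h4 := _root_.map_dvd τ hdvd2
      rwa [hττ] at h4
    have hcopa : IsCoprime a (τ a) := hcop.of_isCoprime_of_dvd_right hdvd3
    have hspan : IsCoprime (Ideal.span {a}) (Ideal.map τ (Ideal.span {a})) := by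
      rw [hmapspan, Ideal.isCoprime_span_singleton_iff]
      exact hcopa
    have hmem := aux_absNorm_mem_closure τ _ hspan
    rw [← hidx, hidx']
    exact hmem
  · -- backward direction
    intro hmem
    clear hm
    have hex : ∃ B : Ideal (𝓞 (CyclotomicField n ℚ)),
        IsCoprime B (Ideal.map τ B) ∧ Ideal.absNorm B = m := by
      induction hmem using Submonoid.closure_induction with
      | mem k hk =>
          obtain ⟨P, hP0, hPprime, hPne, hnorm⟩ := hk
          haveI := hPprime
          refine ⟨P, ?_, hnorm⟩
          rw [Ideal.isCoprime_iff_sup_eq]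
          exact Ideal.IsMaximal.coprime_of_ne (hPprime.isMaximal hP0)
            ((Ideal.map_isPrime_of_equiv τ (I := P)).isMaximal
              (fun hb => hP0 (by simpa [aux_map_map τ hττ] using congrArg (Ideal.map τ) hb)))
            (Ne.symm hPne)
      | one =>
          refine ⟨⊤, ?_, Ideal.absNorm_top⟩
          rw [Ideal.map_top, ← Ideal.one_eq_top]
          exact isCoprime_one_left
      | mul x y hx hy ihx ihy =>
          obtain ⟨B1, h1, hn1⟩ := ihx
          obtain ⟨B2, h2, hn2⟩ := ihy
          obtain ⟨B, hB, hNB⟩ := aux_merge τ hττ B2 h2 B1 h1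
          exact ⟨B, hB, by rw [hNB, hn1, hn2]⟩
    obtain ⟨B, hBcop, hBnorm⟩ := hex
    obtain ⟨α, hα⟩ := (IsPrincipalIdealRing.principal B).principal
    rw [Ideal.submodule_span_eq] at hα
    have hα0 : α ≠ 0 := by
      rintro rfl
      rw [Ideal.span_singleton_eq_bot.mpr rfl] at hα
      rw [hα] at hBcop
      have h := hBcop.sup_eq
      rw [Ideal.map_bot, sup_idem] at h
      exact absurd h bot_ne_top
    have hτα0 : τ α ≠ 0 := by
      intro h
      apply hα0
      rw [← hττ α, h, map_zero]
    have hcopα : IsCoprime α (τ α) := by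
      rw [hα, hmapspan, Ideal.isCoprime_span_singleton_iff] at hBcop
      exact hBcop
    have hFA0 : algebraMap _ (CyclotomicField n ℚ) α ≠ 0 := by simpa using hα0
    have hFT0 : algebraMap _ (CyclotomicField n ℚ) (τ α) ≠ 0 := by simpa using hτα0
    refine ⟨algebraMap _ (CyclotomicField n ℚ) α / algebraMap _ _ (τ α), ?_, ?_⟩
    · have hσγ : σ (algebraMap _ (CyclotomicField n ℚ) α / algebraMap _ _ (τ α))
          = algebraMap _ (CyclotomicField n ℚ) (τ α) / algebraMap _ _ α := by
        rw [map_div₀, hστ, hστ, hττ]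
      rw [hσγ, div_mul_div_comm, mul_comm (algebraMap _ _ α)]
      exact div_self (mul_ne_zero hFT0 hFA0)
    · have hidx := aux_relindex_eq_absNorm
        (algebraMap _ (CyclotomicField n ℚ) α / algebraMap _ _ (τ α)) α (τ α)
        (by rw [div_mul_cancel₀ _ hFT0]) hcopα
      rw [hidx, ← hα, hBnorm]
end

section
/- Let n ≥ 3, let K = ℚ(ζ_n) be the n-th cyclotomic field with ring of integers 𝓞_K, and let p be a rational prime with p ∤ n. Then for every nonzero prime ideal P of 𝓞_K lying above p, the inertia degree of P over pℤ equals the multiplicative order of p modulo n, i.e. the smallest d ≥ 1 such that n divides p^d − 1. -/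
open NumberField

open Polynomial IsCyclotomicExtension

set_option maxHeartbeats 2000000
set_option synthInstance.maxHeartbeats 1000000

instance cycloQ_isCyclotomicExtension (m : ℕ) : IsCyclotomicExtension {m} ℚ (CyclotomicField m ℚ) :=
  CyclotomicField.instIsCyclotomicExtensionSingletonNatSetOfCharZero m ℚ


lemma aux_denom (n : ℕ+) (p : ℕ) (hp : p.Prime) (hpn : ¬ p ∣ (n : ℕ)) :
    ∃ m : ℤ, ¬ (p : ℤ) ∣ m ∧ ∀ x : 𝓞 (CyclotomicField n ℚ),
      ∃ Q : Polynomial ℤ, (m : 𝓞 (CyclotomicField n ℚ)) * x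
        = Polynomial.aeval (zeta_spec n ℚ (CyclotomicField n ℚ)).toInteger Q := by
  set K := CyclotomicField n ℚ with hK
  haveI : NumberField K := IsCyclotomicExtension.numberField {(n : ℕ)} ℚ K
  have hζ := zeta_spec n ℚ K
  set ζ : K := zeta n ℚ K with hzdef
  have hint : IsIntegral ℤ ζ := hζ.isIntegral n.pos
  have haev : ∀ Q : Polynomial ℤ, IsIntegral ℤ (aeval ζ Q) := by
    intro Q
    have : aeval ζ Q ∈ Algebra.adjoin ℤ ({ζ} : Set K) := by
      rw [Algebra.adjoin_singleton_eq_range_aeval]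
      exact ⟨Q, rfl⟩
    exact adjoin_le_integralClosure hint this
  set B := hζ.powerBasis ℚ with hBdef
  have hBgen : B.gen = ζ := hζ.powerBasis_gen ℚ
  have hdiscint : IsIntegral ℤ (Algebra.discr ℚ B.basis) := by
    refine Algebra.discr_isIntegral ℚ fun i => ?_
    rw [B.coe_basis, hBgen]
    exact hint.pow _
  obtain ⟨m, hm⟩ := IsIntegrallyClosed.isIntegral_iff.mp hdiscint
  set Pz := minpoly ℤ ζ with hPz
  obtain ⟨g, hg⟩ : Pz ∣ X ^ (n : ℕ) - 1 := hζ.minpoly_dvd_x_pow_sub_one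
  have hder : (aeval ζ (derivative Pz)) * (ζ * aeval ζ g) = ((n : ℕ) : K) := by
    have h1 : aeval ζ (derivative (X ^ (n : ℕ) - 1 : Polynomial ℤ)) =
        aeval ζ (derivative Pz) * aeval ζ g := by
      rw [hg, derivative_mul, map_add, map_mul, map_mul, minpoly.aeval, zero_mul, add_zero]
    have h2 : aeval ζ (derivative (X ^ (n : ℕ) - 1 : Polynomial ℤ)) =
        ((n : ℕ) : K) * ζ ^ ((n : ℕ) - 1) := by
      simp [derivative_X_pow]
    have h3 : ζ ^ ((n : ℕ) - 1) * ζ = 1 := by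
      rw [← pow_succ, Nat.sub_add_cancel n.pos, hζ.pow_eq_one]
    calc (aeval ζ (derivative Pz)) * (ζ * aeval ζ g)
        = (aeval ζ (derivative Pz) * aeval ζ g) * ζ := by ring
      _ = ((n : ℕ) : K) * ζ ^ ((n : ℕ) - 1) * ζ := by rw [← h1, h2]
      _ = ((n : ℕ) : K) := by rw [mul_assoc, h3, mul_one]
  obtain ⟨a, ha⟩ := IsIntegrallyClosed.isIntegral_iff.mp
    (Algebra.isIntegral_norm (R := ℤ) ℚ (haev (derivative Pz)))
  obtain ⟨b, hb⟩ := IsIntegrallyClosed.isIntegral_iff.mp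
    (Algebra.isIntegral_norm (R := ℤ) ℚ (hint.mul (haev g)))
  rw [eq_intCast] at ha hb hm
  have hab : a * b = ((n : ℕ) : ℤ) ^ Module.finrank ℚ K := by
    have h4 : (Algebra.norm ℚ) (aeval ζ (derivative Pz)) * (Algebra.norm ℚ) (ζ * aeval ζ g)
        = ((n : ℕ) : ℚ) ^ Module.finrank ℚ K := by
      rw [← map_mul, hder, show ((n : ℕ) : K) = algebraMap ℚ K ((n : ℕ) : ℚ) by push_cast; rfl]
      exact Algebra.norm_algebraMap _
    rw [← ha, ← hb] at h4
    exact_mod_cast h4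
  have hpa : ¬ (p : ℤ) ∣ a := by
    intro hdvd
    have h5 : (p : ℤ) ∣ ((n : ℕ) : ℤ) ^ Module.finrank ℚ K := hab ▸ hdvd.mul_right b
    have h6 := (Nat.prime_iff_prime_int.mp hp).dvd_of_dvd_pow h5
    exact hpn (Int.natCast_dvd_natCast.mp h6)
  have hdisc := Algebra.discr_powerBasis_eq_norm ℚ B
  set e := Module.finrank ℚ K * (Module.finrank ℚ K - 1) / 2 with he
  have hminpolyQ : minpoly ℚ B.gen = Pz.map (algebraMap ℤ ℚ) := by
    rw [hBgen, hPz]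
    exact minpoly.isIntegrallyClosed_eq_field_fractions ℚ K hint
  have hnorm_a : (Algebra.norm ℚ) (aeval B.gen (derivative (minpoly ℚ B.gen))) = (a : ℚ) := by
    rw [hminpolyQ, derivative_map, hBgen, aeval_map_algebraMap, ha]
  have hmval : (m : ℚ) = (-1) ^ e * (a : ℚ) := by rw [hm, hdisc, hnorm_a]
  have hmeq : m = (-1) ^ e * a := by exact_mod_cast hmval
  refine ⟨m, ?_, ?_⟩
  · rw [hmeq]
    intro hdvd
    exact hpa ((IsUnit.dvd_mul_left ((isUnit_one.neg).pow e)).mp hdvd)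
  · intro x
    have hxint : IsIntegral ℤ (algebraMap (𝓞 K) K x) := x.2
    have hmem := Algebra.discr_mul_isIntegral_mem_adjoin (R := ℤ) (K := ℚ)
      (B := B) (hBgen ▸ hint) hxint
    rw [← hm] at hmem
    have hsm : (m : ℚ) • (algebraMap (𝓞 K) K x) = algebraMap (𝓞 K) K ((m : 𝓞 K) * x) := by
      exact (Algebra.smul_def _ _).trans (by rw [map_mul, map_intCast, map_intCast])
    have hmem2 : algebraMap (𝓞 K) K ((m : 𝓞 K) * x) ∈ Algebra.adjoin ℤ ({ζ} : Set K) := by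
      rw [hBgen] at hmem
      rw [← hsm]
      exact hmem
    rw [Algebra.adjoin_singleton_eq_range_aeval] at hmem2
    obtain ⟨Q, hQ⟩ := hmem2
    refine ⟨Q, ?_⟩
    apply RingOfIntegers.coe_injective
    rw [← hQ]
    have h7 : algebraMap (𝓞 K) K (aeval hζ.toInteger Q) = aeval ζ Q := by
      have := (Polynomial.aeval_algHom_apply (IsScalarTower.toAlgHom ℤ (𝓞 K) K)
        hζ.toInteger Q).symm
      simp at this
      exact this
    exact h7.symm

/-- Let `K = ℚ(ζₙ)` (`n ≥ 3`) and let `p` be a rational prime not dividing `n`. Then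
for every nonzero prime ideal `P` of `𝓞_K` above `p`, the inertia degree of `P` over
`pℤ` is the smallest `d ≥ 1` such that `n ∣ p^d − 1`. -/
theorem cyclotomic_inertiaDeg_eq_order (n : ℕ+) (hn : 3 ≤ (n : ℕ))
    (p : ℕ) (hp : p.Prime) (hpn : ¬ p ∣ (n : ℕ))
    (P : Ideal (𝓞 (CyclotomicField n ℚ))) (hP0 : P ≠ ⊥) (hPprime : P.IsPrime)
    (hPp : (p : 𝓞 (CyclotomicField n ℚ)) ∈ P) :
    IsLeast {d : ℕ | 1 ≤ d ∧ ((n : ℕ) : ℤ) ∣ (p : ℤ) ^ d - 1}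
      (Ideal.inertiaDeg'
        (Ideal.span {(p : ℤ)}) P) := by
  have hfact : Fact p.Prime := ⟨hp⟩
  haveI : NumberField (CyclotomicField n ℚ) :=
    IsCyclotomicExtension.numberField {(n : ℕ)} ℚ (CyclotomicField n ℚ)
  have hζ := zeta_spec n ℚ (CyclotomicField n ℚ)
  haveI hp0max : (Ideal.span {(p : ℤ)}).IsMaximal :=
    PrincipalIdealRing.isMaximal_of_irreducible (Nat.prime_iff_prime_int.mp hp).irreducible
  haveI hPmax : P.IsMaximal := Ideal.IsPrime.isMaximal hPprime hP0
  haveI hlies : P.LiesOver (Ideal.span {(p : ℤ)}) := by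
    constructor
    have hle : Ideal.span {(p : ℤ)} ≤ P.comap (algebraMap ℤ (𝓞 (CyclotomicField n ℚ))) := by
      rw [Ideal.span_le, Set.singleton_subset_iff]
      show algebraMap ℤ (𝓞 (CyclotomicField n ℚ)) (p : ℤ) ∈ P
      rw [map_natCast]
      exact hPp
    have hne : P.comap (algebraMap ℤ (𝓞 (CyclotomicField n ℚ))) ≠ ⊤ :=
      (hPprime.comap (algebraMap ℤ (𝓞 (CyclotomicField n ℚ)))).ne_top
    rw [Ideal.under_def]
    exact hp0max.eq_of_le hne hle
  haveI finF : Finite (𝓞 (CyclotomicField n ℚ) ⧸ P) :=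
    (Ideal.absNorm_ne_zero_iff P).mp (by simp [Ideal.absNorm_eq_zero_iff, hP0])
  have hpF : ((p : ℕ) : 𝓞 (CyclotomicField n ℚ) ⧸ P) = 0 := by
    rw [← map_natCast (Ideal.Quotient.mk P)]
    exact Ideal.Quotient.eq_zero_iff_mem.mpr hPp
  haveI hcharF : CharP (𝓞 (CyclotomicField n ℚ) ⧸ P) p := by
    have h1 := ringChar.dvd hpF
    rcases (Nat.Prime.eq_one_or_self_of_dvd hp _ h1) with h | h
    · exact absurd h CharP.ringChar_ne_one
    · exact h ▸ ringChar.charP _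
  set f := Ideal.inertiaDeg' (Ideal.span {(p : ℤ)}) P
    with hfdef
  have hf : f = Module.finrank (ℤ ⧸ Ideal.span {(p : ℤ)}) (𝓞 (CyclotomicField n ℚ) ⧸ P) :=
    Ideal.inertiaDeg'_algebraMap _ P
  have hf1 : 1 ≤ f := Ideal.inertiaDeg'_pos (Ideal.span {(p : ℤ)}) P
  haveI : Finite (ℤ ⧸ Ideal.span {(p : ℤ)}) :=
    Finite.of_equiv _ (Int.quotientSpanNatEquivZMod p).symm.toEquiv
  haveI fintF : Fintype (𝓞 (CyclotomicField n ℚ) ⧸ P) := Fintype.ofFinite _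
  haveI fintB : Fintype (ℤ ⧸ Ideal.span {(p : ℤ)}) := Fintype.ofFinite _
  have hcardB : Fintype.card (ℤ ⧸ Ideal.span {(p : ℤ)}) = p := by
    rw [← Nat.card_eq_fintype_card, Nat.card_congr (Int.quotientSpanNatEquivZMod p).toEquiv,
      Nat.card_zmod]
  have hcardF : Fintype.card (𝓞 (CyclotomicField n ℚ) ⧸ P) = p ^ f := by
    letI fB : Field (ℤ ⧸ Ideal.span {(p : ℤ)}) := Ideal.Quotient.field _
    have hc := Module.card_eq_pow_finrank (K := ℤ ⧸ Ideal.span {(p : ℤ)}) (V := 𝓞 (CyclotomicField n ℚ) ⧸ P)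
    rw [hcardB] at hc
    rw [hf]
    exact hc
  set ζbar : 𝓞 (CyclotomicField n ℚ) ⧸ P := Ideal.Quotient.mk P hζ.toInteger with hζbar
  have haevbar : ∀ Q : Polynomial ℤ,
      Ideal.Quotient.mk P (aeval hζ.toInteger Q) = aeval ζbar Q := by
    intro Q
    have h1 := Polynomial.aeval_algHom_apply (Ideal.Quotient.mkₐ ℤ P) hζ.toInteger Q
    simpa using h1.symm
  haveI hNeZero : NeZero ((n : ℕ) : 𝓞 (CyclotomicField n ℚ) ⧸ P) := by
    constructor
    rw [Ne, CharP.cast_eq_zero_iff (𝓞 (CyclotomicField n ℚ) ⧸ P) p (n : ℕ)]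
    exact hpn
  have hprim : IsPrimitiveRoot ζbar (n : ℕ) := by
    have hroot : IsRoot (cyclotomic (n : ℕ) (𝓞 (CyclotomicField n ℚ))) hζ.toInteger :=
      (hζ.toInteger_isPrimitiveRoot).isRoot_cyclotomic n.pos
    have hroot2 : IsRoot (cyclotomic (n : ℕ) (𝓞 (CyclotomicField n ℚ) ⧸ P)) ζbar := by
      rw [IsRoot, ← map_cyclotomic (n : ℕ) (Ideal.Quotient.mk P), eval_map, hζbar,
        Polynomial.eval₂_hom, hroot.eq_zero, map_zero]
    exact (Polynomial.isRoot_cyclotomic_iff).mp hroot2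
  have hne0 : ζbar ≠ 0 := hprim.ne_zero n.pos.ne'
  have hp1 : 1 ≤ p ^ f := Nat.one_le_pow _ _ hp.pos
  have hpow : ζbar ^ p ^ f = ζbar := by
    letI fF : Field (𝓞 (CyclotomicField n ℚ) ⧸ P) := Ideal.Quotient.field P
    have h := FiniteField.pow_card ζbar
    rwa [hcardF] at h
  have hζpow1 : ζbar ^ (p ^ f - 1) = 1 := by
    have h2 : ζbar ^ (p ^ f - 1) * ζbar = 1 * ζbar := by
      rw [← pow_succ, Nat.sub_add_cancel hp1, hpow, one_mul]
    exact mul_right_cancel₀ hne0 h2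
  have hmem : (n : ℕ) ∣ p ^ f - 1 := hprim.pow_eq_one_iff_dvd _ |>.mp hζpow1
  constructor
  · refine ⟨hf1, ?_⟩
    have h3 : ((p ^ f - 1 : ℕ) : ℤ) = (p : ℤ) ^ f - 1 := by
      push_cast [Nat.cast_sub hp1]
      ring
    rw [← h3]
    exact Int.natCast_dvd_natCast.mpr hmem
  · rintro d ⟨hd1, hdvd⟩
    have hpd1 : 1 ≤ p ^ d := Nat.one_le_pow _ _ hp.pos
    have hpd2 : 2 ≤ p ^ d := le_trans hp.two_le (Nat.le_self_pow (by omega) p)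
    have hdvdnat : (n : ℕ) ∣ p ^ d - 1 := by
      have h3 : ((p ^ d - 1 : ℕ) : ℤ) = (p : ℤ) ^ d - 1 := by
        push_cast [Nat.cast_sub hpd1]
        ring
      exact Int.natCast_dvd_natCast.mp (h3 ▸ hdvd)
    obtain ⟨k, hk⟩ := hdvdnat
    have hpdk : p ^ d = (n : ℕ) * k + 1 := by omega
    have hfix : ζbar ^ p ^ d = ζbar := by
      rw [hpdk, pow_add, pow_mul, hprim.pow_eq_one, one_pow, one_mul, pow_one]
    haveI : ExpChar (𝓞 (CyclotomicField n ℚ) ⧸ P) p := ExpChar.prime hp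
    have hφ_apply : ∀ y : 𝓞 (CyclotomicField n ℚ) ⧸ P,
        iterateFrobenius (𝓞 (CyclotomicField n ℚ) ⧸ P) p d y = y ^ p ^ d :=
      fun y => by rw [iterateFrobenius_def]
    have hφ_aeval : ∀ Q : Polynomial ℤ,
        (aeval ζbar Q) ^ p ^ d = aeval ζbar Q := by
      intro Q
      have h1 : iterateFrobenius (𝓞 (CyclotomicField n ℚ) ⧸ P) p d (aeval ζbar Q)
          = aeval (iterateFrobenius (𝓞 (CyclotomicField n ℚ) ⧸ P) p d ζbar) Q := by
        show iterateFrobenius _ p d (eval₂ (algebraMap ℤ _) ζbar Q)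
          = eval₂ (algebraMap ℤ _) (iterateFrobenius _ p d ζbar) Q
        rw [Polynomial.hom_eval₂]
        congr 1
        exact Subsingleton.elim _ _
      rw [← hφ_apply, h1, hφ_apply, hfix]
    obtain ⟨m, hpm, hM⟩ := aux_denom n p hp hpn
    have hmF : ((m : ℤ) : 𝓞 (CyclotomicField n ℚ) ⧸ P) ≠ 0 := by
      rw [Ne, CharP.intCast_eq_zero_iff (𝓞 (CyclotomicField n ℚ) ⧸ P) p m]
      exact hpm
    have hall : ∀ y : 𝓞 (CyclotomicField n ℚ) ⧸ P, y ^ p ^ d = y := by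
      intro y
      obtain ⟨x, rfl⟩ := Ideal.Quotient.mk_surjective (I := P) y
      obtain ⟨Q, hQ⟩ := hM x
      have h2 : ((m : ℤ) : 𝓞 (CyclotomicField n ℚ) ⧸ P) * Ideal.Quotient.mk P x
          = aeval ζbar Q := by
        rw [← haevbar, ← hQ, map_mul, map_intCast]
      have h3 := hφ_aeval Q
      rw [← h2, mul_pow] at h3
      have h4 : ((m : ℤ) : 𝓞 (CyclotomicField n ℚ) ⧸ P) ^ p ^ d
          = ((m : ℤ) : 𝓞 (CyclotomicField n ℚ) ⧸ P) := by
        have h5 := hφ_aeval (Polynomial.C m)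
        rwa [aeval_C, eq_intCast] at h5
      rw [h4] at h3
      exact mul_left_cancel₀ hmF h3
    -- bound the cardinality by the number of roots of X ^ p ^ d - X
    have hcard_le : Fintype.card (𝓞 (CyclotomicField n ℚ) ⧸ P) ≤ p ^ d := by
      classical
      set q : Polynomial (𝓞 (CyclotomicField n ℚ) ⧸ P) := X ^ p ^ d - X with hq
      have hqd : q.natDegree = p ^ d := by
        have h1 : (X : Polynomial (𝓞 (CyclotomicField n ℚ) ⧸ P)).natDegree
            < ((X : Polynomial (𝓞 (CyclotomicField n ℚ) ⧸ P)) ^ p ^ d).natDegree := by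
          rw [natDegree_X_pow, natDegree_X]
          omega
        rw [hq, natDegree_sub_eq_left_of_natDegree_lt h1, natDegree_X_pow]
      have hq0 : q ≠ 0 := by
        intro h
        rw [h, natDegree_zero] at hqd
        omega
      have hsub : (Finset.univ : Finset (𝓞 (CyclotomicField n ℚ) ⧸ P)) ⊆ q.roots.toFinset := by
        intro y _
        rw [Multiset.mem_toFinset, mem_roots hq0]
        simp [hq, IsRoot, hall y]
      calc Fintype.card (𝓞 (CyclotomicField n ℚ) ⧸ P)
          = (Finset.univ : Finset (𝓞 (CyclotomicField n ℚ) ⧸ P)).card := rfl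
        _ ≤ q.roots.toFinset.card := Finset.card_le_card hsub
        _ ≤ Multiset.card q.roots := q.roots.toFinset_card_le
        _ ≤ q.natDegree := q.card_roots'
        _ = p ^ d := hqd
    rw [hcardF] at hcard_le
    exact (Nat.pow_le_pow_iff_right hp.one_lt).mp hcard_le
end
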